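/- arXiv:1311.1720 — 2 statements merged into one kernel-verified Lean document; each statement's English description precedes it below -/
import Mathlib

section
/- For any operators A, B on an n-dimensional complex Hilbert space, the integral over the projective space (with the unique U(n)-invariant probability measure μₙ) of conj(F_A)·F_B equals (tr(A*B) + tr(A*)tr(B)) / (n(n+1)), where F_A(p) = tr(pA). -/
open Matrix MeasureTheory
open scoped ComplexOrder
noncomputable section

/-- The projective space of `ℂⁿ`, identified with the set of rank-one orthogonal projections
(positive semidefinite idempotents of unit trace). -/
def ProjSp (n : ℕ) : Type :=
  {p : Matrix (Fin n) (Fin n) ℂ // p.PosSemidef ∧ p * p = p ∧ p.trace = 1}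

instance (n : ℕ) : MeasurableSpace (Matrix (Fin n) (Fin n) ℂ) :=
  (inferInstance : MeasurableSpace (Fin n → Fin n → ℂ))

instance (n : ℕ) : MeasurableSpace (ProjSp n) :=
  (inferInstance : MeasurableSpace
    {p : Matrix (Fin n) (Fin n) ℂ // p.PosSemidef ∧ p * p = p ∧ p.trace = 1})

/-- The action `p ↦ U p U⁻¹ = U p U*` of the unitary group `U(n)` on the projective space. -/
def projConj {n : ℕ} (U : Matrix.unitaryGroup (Fin n) ℂ) (p : ProjSp n) : ProjSp n :=
  ⟨(U : Matrix (Fin n) (Fin n) ℂ) * p.1 * star (U : Matrix (Fin n) (Fin n) ℂ), by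
    obtain ⟨hpos, hidem, htr⟩ := p.2
    have hU : star (U : Matrix (Fin n) (Fin n) ℂ) * (U : Matrix (Fin n) (Fin n) ℂ) = 1 :=
      Unitary.star_mul_self_of_mem U.2
    refine ⟨?_, ?_, ?_⟩
    · simpa [Matrix.star_eq_conjTranspose] using
        hpos.mul_mul_conjTranspose_same (U : Matrix (Fin n) (Fin n) ℂ)
    · calc (U * p.1 * star (U : Matrix (Fin n) (Fin n) ℂ)) *
            ((U : Matrix (Fin n) (Fin n) ℂ) * p.1 * star (U : Matrix (Fin n) (Fin n) ℂ))
          = (U : Matrix (Fin n) (Fin n) ℂ) * p.1 *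
              (star (U : Matrix (Fin n) (Fin n) ℂ) * (U : Matrix (Fin n) (Fin n) ℂ)) *
              p.1 * star (U : Matrix (Fin n) (Fin n) ℂ) := by
            simp only [Matrix.mul_assoc]
      _ = (U : Matrix (Fin n) (Fin n) ℂ) * p.1 * star (U : Matrix (Fin n) (Fin n) ℂ) := by
            rw [hU]; simp only [Matrix.mul_one, Matrix.mul_assoc, hidem]
    · rw [Matrix.trace_mul_cycle, hU, Matrix.one_mul, htr]⟩

namespace TIF

variable {n : ℕ}

lemma meas_entry (i j : Fin n) : Measurable (fun p : ProjSp n => p.1 i j) := by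
  have h1 : Measurable (fun p : ProjSp n => (p.1 : Matrix (Fin n) (Fin n) ℂ)) :=
    measurable_subtype_coe
  have h2 : Measurable (fun M : Matrix (Fin n) (Fin n) ℂ => M i j) :=
    (measurable_pi_apply j).comp (measurable_pi_apply i)
  exact h2.comp h1

lemma herm (p : ProjSp n) (i j : Fin n) : (starRingEnd ℂ) (p.1 i j) = p.1 j i := by
  have h := p.2.1.1
  have := congrArg (fun M => M j i) h
  simpa [Matrix.conjTranspose_apply] using this

lemma diag_entry_eq (p : ProjSp n) (i : Fin n) :
    p.1 i i = ((∑ j, Complex.normSq (p.1 i j) : ℝ) : ℂ) := by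
  have h2 := p.2.2.1
  have := congrArg (fun M => M i i) h2
  simp only [Matrix.mul_apply] at this
  rw [← this]
  push_cast
  refine Finset.sum_congr rfl fun j _ => ?_
  rw [show p.1 j i = (starRingEnd ℂ) (p.1 i j) from (herm p i j).symm, Complex.mul_conj]

lemma sum_normSq (p : ProjSp n) : ∑ i, ∑ j, Complex.normSq (p.1 i j) = 1 := by
  have htr := p.2.2.2
  have : (p.1).trace = ((∑ i, ∑ j, Complex.normSq (p.1 i j) : ℝ) : ℂ) := by
    rw [Matrix.trace]
    push_cast
    exact Finset.sum_congr rfl fun i _ => by simpa [Matrix.diag] using diag_entry_eq p i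
  rw [htr] at this
  exact_mod_cast this.symm

lemma entry_norm_le (p : ProjSp n) (i j : Fin n) : ‖p.1 i j‖ ≤ 1 := by
  have h1 : Complex.normSq (p.1 i j) ≤ 1 := by
    rw [← sum_normSq p]
    calc Complex.normSq (p.1 i j) ≤ ∑ j', Complex.normSq (p.1 i j') :=
          Finset.single_le_sum (fun _ _ => Complex.normSq_nonneg _) (Finset.mem_univ j)
      _ ≤ ∑ i', ∑ j', Complex.normSq (p.1 i' j') :=
          Finset.single_le_sum (fun i' _ => Finset.sum_nonneg fun _ _ => Complex.normSq_nonneg _)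
            (Finset.mem_univ i)
  have : ‖p.1 i j‖ ^ 2 ≤ 1 := by rwa [← Complex.sq_norm] at h1
  nlinarith [norm_nonneg (p.1 i j)]

lemma sum_two {i k : Fin n} (hik : i ≠ k) (a b : ℂ) (f : Fin n → ℂ) :
    ∑ x, (if x = i then a else if x = k then b else 0) * f x = a * f i + b * f k := by
  have h : ∀ x, (if x = i then a else if x = k then b else 0) * f x
      = (if x = i then a * f i else 0) + (if x = k then b * f k else 0) := by
    intro x
    by_cases h1 : x = i
    · have h2 : ¬ x = k := fun h2 => hik (h1 ▸ h2)
      simp [h1, if_neg hik]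
    · by_cases h2 : x = k <;> simp [h1, h2, Ne.symm hik]
  simp only [h, Finset.sum_add_distrib, Finset.sum_ite_eq', Finset.mem_univ, if_true]

lemma sum_two' {i k : Fin n} (hik : i ≠ k) (a b : ℂ) (f : Fin n → ℂ) :
    ∑ x, f x * (if x = i then a else if x = k then b else 0) = f i * a + f k * b := by
  calc ∑ x, f x * (if x = i then a else if x = k then b else 0)
      = ∑ x, (if x = i then a else if x = k then b else 0) * f x :=
        Finset.sum_congr rfl fun x _ => mul_comm _ _
    _ = a * f i + b * f k := sum_two hik a b f
    _ = f i * a + f k * b := by ring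

def emb2 (i k : Fin n) (a b c d : ℂ) : Matrix (Fin n) (Fin n) ℂ :=
  Matrix.of fun x y =>
    if x = i then (if y = i then a else if y = k then b else 0)
    else if x = k then (if y = i then c else if y = k then d else 0)
    else if x = y then 1 else 0

lemma emb2_mul_apply {i k : Fin n} (hik : i ≠ k) (a b c d : ℂ)
    (q : Matrix (Fin n) (Fin n) ℂ) (x y : Fin n) :
    (emb2 i k a b c d * q) x y =
      if x = i then a * q i y + b * q k y
      else if x = k then c * q i y + d * q k y
      else q x y := by
  rw [Matrix.mul_apply]
  by_cases hx : x = i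
  · rw [if_pos hx]
    simp only [emb2, Matrix.of_apply, hx, if_pos rfl]
    exact sum_two hik a b (fun z => q z y)
  · by_cases hx2 : x = k
    · rw [if_neg hx, if_pos hx2]
      simp only [emb2, Matrix.of_apply, hx2, if_neg (Ne.symm hik), if_pos rfl]
      exact sum_two hik c d (fun z => q z y)
    · rw [if_neg hx, if_neg hx2]
      simp only [emb2, Matrix.of_apply, if_neg hx, if_neg hx2]
      simp [ite_mul, Finset.sum_ite_eq]

lemma mul_emb2_star_apply {i k : Fin n} (hik : i ≠ k) (a b c d : ℂ)
    (q : Matrix (Fin n) (Fin n) ℂ) (x y : Fin n) :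
    (q * star (emb2 i k a b c d)) x y =
      if y = i then q x i * (starRingEnd ℂ) a + q x k * (starRingEnd ℂ) b
      else if y = k then q x i * (starRingEnd ℂ) c + q x k * (starRingEnd ℂ) d
      else q x y := by
  rw [Matrix.star_eq_conjTranspose, Matrix.mul_apply]
  simp only [Matrix.conjTranspose_apply, RCLike.star_def]
  by_cases hy : y = i
  · rw [if_pos hy]
    have h : ∀ z, (starRingEnd ℂ) (emb2 i k a b c d y z)
        = (if z = i then (starRingEnd ℂ) a else if z = k then (starRingEnd ℂ) b else 0) := by
      intro z
      simp only [emb2, Matrix.of_apply, hy, if_pos rfl]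
      by_cases h1 : z = i
      · simp [h1]
      · by_cases h2 : z = k <;> simp [h1, h2, Ne.symm hik, apply_ite (starRingEnd ℂ)]
    simp only [h]
    exact sum_two' hik _ _ (fun z => q x z)
  · by_cases hy2 : y = k
    · rw [if_neg hy, if_pos hy2]
      have h : ∀ z, (starRingEnd ℂ) (emb2 i k a b c d y z)
          = (if z = i then (starRingEnd ℂ) c else if z = k then (starRingEnd ℂ) d else 0) := by
        intro z
        simp only [emb2, Matrix.of_apply, hy2, if_neg (Ne.symm hik), if_pos rfl]
        by_cases h1 : z = i
        · simp [h1]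
        · by_cases h2 : z = k <;> simp [h1, h2, Ne.symm hik, apply_ite (starRingEnd ℂ)]
      simp only [h]
      exact sum_two' hik _ _ (fun z => q x z)
    · rw [if_neg hy, if_neg hy2]
      have h : ∀ z, q x z * (starRingEnd ℂ) (emb2 i k a b c d y z)
          = q x z * (if y = z then 1 else 0) := by
        intro z
        simp only [emb2, Matrix.of_apply, if_neg hy, if_neg hy2]
        by_cases h1 : y = z <;> simp [h1]
      simp only [h, mul_ite, mul_one, mul_zero, Finset.sum_ite_eq, Finset.mem_univ, if_true]

lemma emb2_mem_unitary {i k : Fin n} (hik : i ≠ k) (a b c d : ℂ)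
    (h1 : a * (starRingEnd ℂ) a + b * (starRingEnd ℂ) b = 1)
    (h2 : a * (starRingEnd ℂ) c + b * (starRingEnd ℂ) d = 0)
    (h3 : c * (starRingEnd ℂ) a + d * (starRingEnd ℂ) b = 0)
    (h4 : c * (starRingEnd ℂ) c + d * (starRingEnd ℂ) d = 1) :
    emb2 i k a b c d ∈ Matrix.unitaryGroup (Fin n) ℂ := by
  rw [Matrix.mem_unitaryGroup_iff]
  ext x y
  rw [mul_emb2_star_apply hik a b c d (emb2 i k a b c d) x y]
  have Mxi : ∀ z, emb2 i k a b c d z i = if z = i then a else if z = k then c else 0 := by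
    intro z
    by_cases hz : z = i
    · simp [emb2, hz]
    · by_cases hz2 : z = k <;> simp [emb2, hz, hz2, Ne.symm hik]
  have Mxk : ∀ z, emb2 i k a b c d z k = if z = i then b else if z = k then d else 0 := by
    intro z
    by_cases hz : z = i
    · simp [emb2, hz, Ne.symm hik]
    · by_cases hz2 : z = k <;> simp [emb2, hz, hz2, Ne.symm hik]
  rw [Matrix.one_apply]
  by_cases hy : y = i
  · rw [if_pos hy, Mxi, Mxk]
    by_cases hx : x = i
    · rw [if_pos hx, if_pos hx, if_pos (hy ▸ hx : x = y), h1]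
    · by_cases hx2 : x = k
      · rw [if_neg hx, if_pos hx2, if_neg hx, if_pos hx2,
          if_neg (show ¬ x = y from fun h => hx (h.trans hy)), h3]
      · rw [if_neg hx, if_neg hx2, if_neg hx, if_neg hx2,
          if_neg (show ¬ x = y from fun h => hx (h.trans hy))]
        ring
  · by_cases hy2 : y = k
    · rw [if_neg hy, if_pos hy2, Mxi, Mxk]
      by_cases hx : x = i
      · rw [if_pos hx, if_pos hx,
          if_neg (show ¬ x = y from fun h => hy (hx ▸ h.symm ▸ rfl)), h2]
      · by_cases hx2 : x = k
        · rw [if_neg hx, if_pos hx2, if_neg hx, if_pos hx2, if_pos (hy2 ▸ hx2 : x = y), h4]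
        · rw [if_neg hx, if_neg hx2, if_neg hx, if_neg hx2,
            if_neg (show ¬ x = y from fun h => hx2 (h.trans hy2))]
          ring
    · rw [if_neg hy, if_neg hy2]
      by_cases hx : x = i
      · rw [show emb2 i k a b c d x y = 0 by simp [emb2, hx, Ne.symm (fun h => hy h.symm),
          Ne.symm (fun h => hy2 h.symm)],
          if_neg (show ¬ x = y from fun h => hy (h ▸ hx))]
      · by_cases hx2 : x = k
        · rw [show emb2 i k a b c d x y = 0 by simp [emb2, hx, hx2,
            Ne.symm (fun h => hy h.symm), Ne.symm (fun h => hy2 h.symm)],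
            if_neg (show ¬ x = y from fun h => hy2 (h ▸ hx2))]
        · simp [emb2, hx, hx2]

lemma meas_projConj (U : Matrix.unitaryGroup (Fin n) ℂ) : Measurable (projConj U) := by
  apply Measurable.subtype_mk
  apply measurable_pi_lambda
  intro x
  apply measurable_pi_lambda
  intro y
  have : (fun p : ProjSp n => ((U : Matrix (Fin n) (Fin n) ℂ) * p.1 *
      star (U : Matrix (Fin n) (Fin n) ℂ)) x y) =
      fun p : ProjSp n => ∑ d, (∑ c, (U : Matrix (Fin n) (Fin n) ℂ) x c * p.1 c d) *
        (star (U : Matrix (Fin n) (Fin n) ℂ)) d y := by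
    funext p
    simp [Matrix.mul_apply]
  rw [this]
  exact Finset.measurable_sum _ fun d _ =>
    (Finset.measurable_sum _ fun c _ => (meas_entry c d).const_mul _).mul_const _

variable {μ : Measure (ProjSp n)} [IsProbabilityMeasure μ]

lemma integrable_entry_mul (i j k l : Fin n) :
    Integrable (fun p : ProjSp n => p.1 i j * p.1 k l) μ := by
  refine (integrable_const (1 : ℝ)).mono' (((meas_entry i j).mul (meas_entry k l)).aestronglyMeasurable) ?_
  filter_upwards with p
  rw [norm_mul]
  calc ‖p.1 i j‖ * ‖p.1 k l‖ ≤ 1 * 1 :=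
    mul_le_mul (entry_norm_le p i j) (entry_norm_le p k l) (norm_nonneg _) zero_le_one
  _ = 1 := one_mul 1

lemma integrable_entry (i j : Fin n) :
    Integrable (fun p : ProjSp n => p.1 i j) μ := by
  refine (integrable_const (1 : ℝ)).mono' (meas_entry i j).aestronglyMeasurable ?_
  filter_upwards with p
  exact entry_norm_le p i j

lemma integral_comp_projConj
    (hinv : ∀ U : Matrix.unitaryGroup (Fin n) ℂ, Measure.map (projConj U) μ = μ)
    (U : Matrix.unitaryGroup (Fin n) ℂ) (f : ProjSp n → ℂ) (hf : Measurable f) :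
    ∫ p, f (projConj U p) ∂μ = ∫ p, f p ∂μ := by
  conv_rhs => rw [← hinv U]
  rw [integral_map (meas_projConj U).aemeasurable hf.aestronglyMeasurable]

/-- second moments -/
def c2 (μ : Measure (ProjSp n)) (i j k l : Fin n) : ℂ := ∫ p : ProjSp n, p.1 i j * p.1 k l ∂μ

/-- first moments -/
def m1 (μ : Measure (ProjSp n)) (i j : Fin n) : ℂ := ∫ p : ProjSp n, p.1 i j ∂μ

lemma integral_lin_mul_lin {ι : Type} [Fintype ι] (e f : ι → ℂ) (P Q : ι → Fin n × Fin n) :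
    ∫ p : ProjSp n, (∑ t, e t * p.1 (P t).1 (P t).2) * (∑ u, f u * p.1 (Q u).1 (Q u).2) ∂μ
      = ∑ t, ∑ u, (e t * f u) * c2 μ (P t).1 (P t).2 (Q u).1 (Q u).2 := by
  have h1 : ∀ p : ProjSp n,
      (∑ t, e t * p.1 (P t).1 (P t).2) * (∑ u, f u * p.1 (Q u).1 (Q u).2)
        = ∑ t, ∑ u, (e t * f u) • (p.1 (P t).1 (P t).2 * p.1 (Q u).1 (Q u).2) := by
    intro p
    rw [Finset.sum_mul_sum]
    refine Finset.sum_congr rfl fun t _ => Finset.sum_congr rfl fun u _ => ?_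
    simp [smul_eq_mul]; ring
  simp only [h1]
  rw [integral_finset_sum (μ := μ) Finset.univ
    (f := fun t (p : ProjSp n) => ∑ u, (e t * f u) • (p.1 (P t).1 (P t).2 * p.1 (Q u).1 (Q u).2))
    (fun t _ => integrable_finset_sum _ fun u _ => by simpa [Pi.smul_apply, Pi.smul_def] using (integrable_entry_mul (μ := μ) (P t).1 (P t).2 (Q u).1 (Q u).2).smul (e t * f u))]
  refine Finset.sum_congr rfl fun t _ => ?_
  rw [integral_finset_sum (μ := μ) Finset.univ
    (f := fun u (p : ProjSp n) => (e t * f u) • (p.1 (P t).1 (P t).2 * p.1 (Q u).1 (Q u).2))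
    (fun u _ => by simpa [Pi.smul_apply, Pi.smul_def] using (integrable_entry_mul (μ := μ) (P t).1 (P t).2 (Q u).1 (Q u).2).smul (e t * f u))]
  refine Finset.sum_congr rfl fun u _ => ?_
  rw [integral_smul]
  simp [smul_eq_mul, c2]

lemma integral_lin {ι : Type} [Fintype ι] (e : ι → ℂ) (P : ι → Fin n × Fin n) :
    ∫ p : ProjSp n, (∑ t, e t * p.1 (P t).1 (P t).2) ∂μ
      = ∑ t, e t * m1 μ (P t).1 (P t).2 := by
  have h1 : ∀ p : ProjSp n, (∑ t, e t * p.1 (P t).1 (P t).2)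
      = ∑ t, e t • p.1 (P t).1 (P t).2 := by intro p; simp [smul_eq_mul]
  simp only [h1]
  rw [integral_finset_sum (μ := μ) Finset.univ
    (f := fun t (p : ProjSp n) => e t • p.1 (P t).1 (P t).2)
    (fun t _ => by simpa [Pi.smul_apply, Pi.smul_def] using (integrable_entry (μ := μ) (P t).1 (P t).2).smul (e t))]
  refine Finset.sum_congr rfl fun t _ => ?_
  rw [integral_smul]; simp [smul_eq_mul, m1]


def sC : ℂ := (((Real.sqrt 2 : ℝ) : ℂ))⁻¹

lemma conj_sC : (starRingEnd ℂ) sC = sC := by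
  unfold sC
  rw [map_inv₀, Complex.conj_ofReal]

lemma sC_mul_sC : sC * sC = 2⁻¹ := by
  unfold sC
  rw [← mul_inv]
  rw [show ((Real.sqrt 2 : ℝ) : ℂ) * ((Real.sqrt 2 : ℝ) : ℂ) = ((Real.sqrt 2 * Real.sqrt 2 : ℝ) : ℂ) by push_cast; ring]
  rw [Real.mul_self_sqrt (by norm_num)]
  norm_num

lemma neg_conj_sC : (starRingEnd ℂ) (-sC) = -sC := by rw [map_neg, conj_sC]


-- ## phase unitaries
def phase (m x : Fin n) : ℂ := if x = m then Complex.I else 1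

lemma I_ne_one' : ¬ (Complex.I : ℂ) = 1 := by
  intro h; have := congrArg Complex.im h; simp at this

lemma phase_mem (m : Fin n) : Matrix.diagonal (phase m) ∈ Matrix.unitaryGroup (Fin n) ℂ := by
  rw [Matrix.mem_unitaryGroup_iff, Matrix.star_eq_conjTranspose, Matrix.diagonal_conjTranspose,
    Matrix.diagonal_mul_diagonal]
  rw [show (fun x => phase m x * star (phase m) x) = fun _ => (1 : ℂ) by
    funext x
    by_cases h : x = m <;> simp [phase, h, Pi.star_apply, Complex.star_def, Complex.conj_I,
      Complex.I_mul_I]]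
  exact Matrix.diagonal_one

lemma projConj_coe (U : Matrix.unitaryGroup (Fin n) ℂ) (p : ProjSp n) :
    (projConj U p).1 = (U : Matrix (Fin n) (Fin n) ℂ) * p.1 * star (U : Matrix (Fin n) (Fin n) ℂ) :=
  rfl

lemma phase_apply {m : Fin n} {U : Matrix.unitaryGroup (Fin n) ℂ}
    (hU : (U : Matrix (Fin n) (Fin n) ℂ) = Matrix.diagonal (phase m)) (p : ProjSp n) (x y : Fin n) :
    (projConj U p).1 x y = phase m x * (starRingEnd ℂ) (phase m y) * p.1 x y := by
  rw [projConj_coe, hU]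
  simp only [Matrix.star_eq_conjTranspose, Matrix.diagonal_conjTranspose]
  rw [Matrix.mul_diagonal, Matrix.diagonal_mul]
  simp only [Pi.star_apply, Complex.star_def]
  ring

variable {μ : Measure (ProjSp n)} [IsProbabilityMeasure μ]

lemma c2_phase (hinv : ∀ U : Matrix.unitaryGroup (Fin n) ℂ, Measure.map (projConj U) μ = μ)
    (m i j k l : Fin n) :
    c2 μ i j k l = (phase m i * (starRingEnd ℂ) (phase m j) *
      (phase m k * (starRingEnd ℂ) (phase m l))) * c2 μ i j k l := by
  have h : (∫ p : ProjSp n,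
        (projConj ⟨Matrix.diagonal (phase m), phase_mem m⟩ p).1 i j *
        (projConj ⟨Matrix.diagonal (phase m), phase_mem m⟩ p).1 k l ∂μ) = c2 μ i j k l :=
    integral_comp_projConj hinv _ (fun p : ProjSp n => p.1 i j * p.1 k l)
      ((meas_entry i j).mul (meas_entry k l))
  have h2 : (∫ p : ProjSp n,
        (projConj ⟨Matrix.diagonal (phase m), phase_mem m⟩ p).1 i j *
        (projConj ⟨Matrix.diagonal (phase m), phase_mem m⟩ p).1 k l ∂μ)
      = (phase m i * (starRingEnd ℂ) (phase m j) *
          (phase m k * (starRingEnd ℂ) (phase m l))) • c2 μ i j k l := by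
    rw [show (fun p : ProjSp n =>
        (projConj ⟨Matrix.diagonal (phase m), phase_mem m⟩ p).1 i j *
        (projConj ⟨Matrix.diagonal (phase m), phase_mem m⟩ p).1 k l)
        = (fun p : ProjSp n => (phase m i * (starRingEnd ℂ) (phase m j) *
          (phase m k * (starRingEnd ℂ) (phase m l))) • (p.1 i j * p.1 k l)) from
      funext fun p => by
        rw [phase_apply rfl, phase_apply rfl]
        simp only [smul_eq_mul]
        ring]
    rw [integral_smul]
    rfl
  rw [h2, smul_eq_mul] at h
  exact h.symm

lemma m1_phase (hinv : ∀ U : Matrix.unitaryGroup (Fin n) ℂ, Measure.map (projConj U) μ = μ)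
    (m i j : Fin n) :
    m1 μ i j = (phase m i * (starRingEnd ℂ) (phase m j)) * m1 μ i j := by
  have h : (∫ p : ProjSp n,
        (projConj ⟨Matrix.diagonal (phase m), phase_mem m⟩ p).1 i j ∂μ) = m1 μ i j :=
    integral_comp_projConj hinv _ (fun p : ProjSp n => p.1 i j) (meas_entry i j)
  have h2 : (∫ p : ProjSp n,
        (projConj ⟨Matrix.diagonal (phase m), phase_mem m⟩ p).1 i j ∂μ)
      = (phase m i * (starRingEnd ℂ) (phase m j)) • m1 μ i j := by
    rw [show (fun p : ProjSp n =>
        (projConj ⟨Matrix.diagonal (phase m), phase_mem m⟩ p).1 i j)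
        = (fun p : ProjSp n => (phase m i * (starRingEnd ℂ) (phase m j)) • (p.1 i j)) from
      funext fun p => by
        rw [phase_apply rfl]
        simp only [smul_eq_mul]]
    rw [integral_smul]
    rfl
  rw [h2, smul_eq_mul] at h
  exact h.symm

lemma cancel_self_eq_mul {z w : ℂ} (hw : w ≠ 1) (hc : z = w * z) : z = 0 := by
  have h0 : (1 - w) * z = 0 := by linear_combination hc
  rcases mul_eq_zero.mp h0 with h' | h'
  · exact absurd (by linear_combination -h' : w = 1) hw
  · exact h'

lemma m1_off (hinv : ∀ U : Matrix.unitaryGroup (Fin n) ℂ, Measure.map (projConj U) μ = μ)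
    {i j : Fin n} (hij : i ≠ j) : m1 μ i j = 0 := by
  refine cancel_self_eq_mul ?_ (m1_phase hinv i i j)
  have hji : ¬ j = i := fun h => hij h.symm
  simp [phase, hji]
  exact I_ne_one'

lemma c2_eq_zero (hinv : ∀ U : Matrix.unitaryGroup (Fin n) ℂ, Measure.map (projConj U) μ = μ)
    {i j k l : Fin n} (h : ¬((i = j ∧ k = l) ∨ (i = l ∧ j = k))) : c2 μ i j k l = 0 := by
  by_cases hij : i = j
  · have hkl : ¬ k = l := fun hkl => h (Or.inl ⟨hij, hkl⟩)
    refine cancel_self_eq_mul ?_ (c2_phase hinv k i j k l)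
    have hlk : ¬ l = k := fun h' => hkl h'.symm
    by_cases hik : i = k
    · have hjk : j = k := hij.symm.trans hik
      simp [phase, hik, hjk, hlk, Complex.conj_I, Complex.I_mul_I]
      exact I_ne_one'
    · have hjk : ¬ j = k := fun h' => hik (hij.trans h')
      simp [phase, hik, hjk, hlk, Complex.conj_I]
      exact I_ne_one'
  · by_cases hil : i = l
    · have hjk : ¬ j = k := fun hjk => h (Or.inr ⟨hil, hjk⟩)
      refine cancel_self_eq_mul ?_ (c2_phase hinv j i j k l)
      have hkj : ¬ k = j := fun h' => hjk h'.symm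
      have hlj : ¬ l = j := fun h' => hij (hil.trans h')
      simp [phase, hij, hkj, hlj, Complex.conj_I]
      intro h'
      have := congrArg Complex.im h'
      simp at this
    · refine cancel_self_eq_mul ?_ (c2_phase hinv i i j k l)
      have hji : ¬ j = i := fun h' => hij h'.symm
      have hli : ¬ l = i := fun h' => hil h'.symm
      by_cases hki : k = i
      · simp [phase, hji, hli, hki, Complex.conj_I, Complex.I_mul_I]
        norm_num
      · simp [phase, hji, hli, hki, Complex.conj_I]
        exact I_ne_one'

-- ## Hadamard-type pair unitaries
lemma had_mem {u v : Fin n} (huv : u ≠ v) :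
    emb2 u v sC sC sC (-sC) ∈ Matrix.unitaryGroup (Fin n) ℂ := by
  refine emb2_mem_unitary huv sC sC sC (-sC) ?_ ?_ ?_ ?_
  · rw [conj_sC]; linear_combination 2 * sC_mul_sC
  · rw [conj_sC, neg_conj_sC]; ring
  · rw [conj_sC]; ring
  · rw [conj_sC, neg_conj_sC]; linear_combination 2 * sC_mul_sC

def hadU (u v : Fin n) (huv : u ≠ v) : Matrix.unitaryGroup (Fin n) ℂ :=
  ⟨emb2 u v sC sC sC (-sC), had_mem huv⟩

lemma hadU_coe (u v : Fin n) (huv : u ≠ v) :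
    ((hadU u v huv : Matrix.unitaryGroup (Fin n) ℂ) : Matrix (Fin n) (Fin n) ℂ)
      = emb2 u v sC sC sC (-sC) := rfl

lemma had_uu {u v : Fin n} (huv : u ≠ v) (p : ProjSp n) :
    (projConj (hadU u v huv) p).1 u u
      = 2⁻¹ * (p.1 u u + p.1 v u + p.1 u v + p.1 v v) := by
  rw [projConj_coe, hadU_coe]
  simp only [mul_emb2_star_apply huv, emb2_mul_apply huv]
  simp [huv, Ne.symm huv, conj_sC]
  linear_combination (p.1 u u + p.1 v u + p.1 u v + p.1 v v) * sC_mul_sC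

lemma had_vv {u v : Fin n} (huv : u ≠ v) (p : ProjSp n) :
    (projConj (hadU u v huv) p).1 v v
      = 2⁻¹ * (p.1 u u - p.1 v u - p.1 u v + p.1 v v) := by
  rw [projConj_coe, hadU_coe]
  simp only [mul_emb2_star_apply huv, emb2_mul_apply huv]
  simp [huv, Ne.symm huv, conj_sC, neg_conj_sC]
  linear_combination (p.1 u u - p.1 v u - p.1 u v + p.1 v v) * sC_mul_sC

lemma had_fix {u v x y : Fin n} (huv : u ≠ v) (hxu : x ≠ u) (hxv : x ≠ v)
    (hyu : y ≠ u) (hyv : y ≠ v) (p : ProjSp n) :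
    (projConj (hadU u v huv) p).1 x y = p.1 x y := by
  rw [projConj_coe, hadU_coe]
  simp only [mul_emb2_star_apply huv, emb2_mul_apply huv]
  simp [hxu, hxv, hyu, hyv]

lemma had_xu {u v x : Fin n} (huv : u ≠ v) (hxu : x ≠ u) (hxv : x ≠ v) (p : ProjSp n) :
    (projConj (hadU u v huv) p).1 x u = sC * (p.1 x u + p.1 x v) := by
  rw [projConj_coe, hadU_coe]
  simp only [mul_emb2_star_apply huv, emb2_mul_apply huv]
  simp [hxu, hxv, conj_sC]
  ring

lemma had_ux {u v x : Fin n} (huv : u ≠ v) (hxu : x ≠ u) (hxv : x ≠ v) (p : ProjSp n) :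
    (projConj (hadU u v huv) p).1 u x = sC * (p.1 u x + p.1 v x) := by
  rw [projConj_coe, hadU_coe]
  simp only [mul_emb2_star_apply huv, emb2_mul_apply huv]
  simp [hxu, hxv, hxu.symm, hxv.symm, conj_sC]
  ring

-- ## relations
lemma m_sum : ∑ i, m1 μ i i = 1 := by
  have h : (∑ i, m1 μ i i) = ∫ p : ProjSp n, ∑ i, p.1 i i ∂μ := by
    rw [integral_finset_sum (μ := μ) Finset.univ (f := fun i (p : ProjSp n) => p.1 i i)
      (fun i _ => integrable_entry i i)]
    rfl
  rw [h]
  have h2 : ∀ p : ProjSp n, (∑ i, p.1 i i) = (1 : ℂ) := by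
    intro p
    have := p.2.2.2
    rwa [Matrix.trace] at this
  rw [integral_congr_ae (Filter.Eventually.of_forall h2)]
  simp

lemma m_diag_eq (hinv : ∀ U : Matrix.unitaryGroup (Fin n) ℂ, Measure.map (projConj U) μ = μ)
    {i k : Fin n} (hik : i ≠ k) : m1 μ i i = m1 μ k k := by
  have h : (∫ p : ProjSp n, (projConj (hadU i k hik) p).1 i i ∂μ) = m1 μ i i :=
    integral_comp_projConj hinv _ (fun p : ProjSp n => p.1 i i) (meas_entry i i)
  have hpt : ∀ p : ProjSp n, (projConj (hadU i k hik) p).1 i i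
      = ∑ t : Fin 4, (fun _ : Fin 4 => (2⁻¹ : ℂ)) t *
          p.1 ((![(i,i),(k,i),(i,k),(k,k)] : Fin 4 → Fin n × Fin n) t).1
            ((![(i,i),(k,i),(i,k),(k,k)] : Fin 4 → Fin n × Fin n) t).2 := by
    intro p
    rw [had_uu hik]
    simp [Fin.sum_univ_four]
    ring
  have h2 := (integral_congr_ae (Filter.Eventually.of_forall hpt)).symm.trans h
  rw [integral_lin (μ := μ) (fun _ : Fin 4 => (2⁻¹ : ℂ))
    (![(i,i),(k,i),(i,k),(k,k)] : Fin 4 → Fin n × Fin n)] at h2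
  simp only [Fin.sum_univ_four, Matrix.cons_val_zero, Matrix.cons_val_one, Matrix.head_cons,
    Matrix.cons_val_two, Matrix.tail_cons, Matrix.cons_val_three, Matrix.head_fin_const] at h2
  rw [m1_off hinv (Ne.symm hik), m1_off hinv hik] at h2
  linear_combination -2 * h2

lemma c2_comm (i j k l : Fin n) : c2 μ i j k l = c2 μ k l i j := by
  unfold c2
  exact integral_congr_ae (Filter.Eventually.of_forall fun p => mul_comm _ _)

lemma sum1 (i : Fin n) : ∑ k, c2 μ i i k k = m1 μ i i := by
  have h : (∑ k, c2 μ i i k k) = ∫ p : ProjSp n, ∑ k, p.1 i i * p.1 k k ∂μ := by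
    rw [integral_finset_sum (μ := μ) Finset.univ
      (f := fun k (p : ProjSp n) => p.1 i i * p.1 k k)
      (fun k _ => integrable_entry_mul i i k k)]
    rfl
  rw [h]
  have h2 : ∀ p : ProjSp n, (∑ k, p.1 i i * p.1 k k) = p.1 i i := by
    intro p
    have htr := p.2.2.2
    rw [Matrix.trace] at htr
    rw [← Finset.mul_sum]
    simp only [Matrix.diag] at htr
    rw [htr, mul_one]
  exact integral_congr_ae (Filter.Eventually.of_forall h2)

lemma sum2 (i : Fin n) : ∑ j, c2 μ i j j i = m1 μ i i := by
  have h : (∑ j, c2 μ i j j i) = ∫ p : ProjSp n, ∑ j, p.1 i j * p.1 j i ∂μ := by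
    rw [integral_finset_sum (μ := μ) Finset.univ
      (f := fun j (p : ProjSp n) => p.1 i j * p.1 j i)
      (fun j _ => integrable_entry_mul i j j i)]
    rfl
  rw [h]
  have h2 : ∀ p : ProjSp n, (∑ j, p.1 i j * p.1 j i) = p.1 i i := by
    intro p
    have hid := p.2.2.1
    have := congrArg (fun M => M i i) hid
    simpa [Matrix.mul_apply] using this
  exact integral_congr_ae (Filter.Eventually.of_forall h2)

lemma alpha_rel (hinv : ∀ U : Matrix.unitaryGroup (Fin n) ℂ, Measure.map (projConj U) μ = μ)
    {i k : Fin n} (hik : i ≠ k) :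
    c2 μ i i i i = c2 μ k k k k ∧ c2 μ i i i i = c2 μ i i k k + c2 μ i k k i := by
  have z1 : c2 μ i i k i = 0 := c2_eq_zero hinv (by simp [hik, Ne.symm hik])
  have z2 : c2 μ i i i k = 0 := c2_eq_zero hinv (by simp [hik, Ne.symm hik])
  have z3 : c2 μ k i i i = 0 := c2_eq_zero hinv (by simp [hik, Ne.symm hik])
  have z4 : c2 μ i k i i = 0 := c2_eq_zero hinv (by simp [hik, Ne.symm hik])
  have z5 : c2 μ k i k i = 0 := c2_eq_zero hinv (by simp [hik, Ne.symm hik])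
  have z6 : c2 μ i k i k = 0 := c2_eq_zero hinv (by simp [hik, Ne.symm hik])
  have z7 : c2 μ k i k k = 0 := c2_eq_zero hinv (by simp [hik, Ne.symm hik])
  have z8 : c2 μ i k k k = 0 := c2_eq_zero hinv (by simp [hik, Ne.symm hik])
  have z9 : c2 μ k k k i = 0 := c2_eq_zero hinv (by simp [hik, Ne.symm hik])
  have z10 : c2 μ k k i k = 0 := c2_eq_zero hinv (by simp [hik, Ne.symm hik])
  have s1 : c2 μ k k i i = c2 μ i i k k := c2_comm k k i i
  have s2 : c2 μ k i i k = c2 μ i k k i := c2_comm k i i k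
  have h1 : (∫ p : ProjSp n,
      (projConj (hadU i k hik) p).1 i i * (projConj (hadU i k hik) p).1 i i ∂μ)
      = c2 μ i i i i :=
    integral_comp_projConj hinv _ (fun p : ProjSp n => p.1 i i * p.1 i i)
      ((meas_entry i i).mul (meas_entry i i))
  have hpt1 : ∀ p : ProjSp n,
      (projConj (hadU i k hik) p).1 i i * (projConj (hadU i k hik) p).1 i i
      = (∑ t : Fin 4, (fun _ : Fin 4 => (2⁻¹ : ℂ)) t *
          p.1 ((![(i,i),(k,i),(i,k),(k,k)] : Fin 4 → Fin n × Fin n) t).1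
            ((![(i,i),(k,i),(i,k),(k,k)] : Fin 4 → Fin n × Fin n) t).2) *
        (∑ t : Fin 4, (fun _ : Fin 4 => (2⁻¹ : ℂ)) t *
          p.1 ((![(i,i),(k,i),(i,k),(k,k)] : Fin 4 → Fin n × Fin n) t).1
            ((![(i,i),(k,i),(i,k),(k,k)] : Fin 4 → Fin n × Fin n) t).2) := by
    intro p
    rw [had_uu hik]
    congr 1 <;> · simp [Fin.sum_univ_four]; ring
  have e1 := h1.symm.trans ((integral_congr_ae (Filter.Eventually.of_forall hpt1)).trans
    (integral_lin_mul_lin (μ := μ) (fun _ : Fin 4 => (2⁻¹ : ℂ)) (fun _ : Fin 4 => (2⁻¹ : ℂ))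
      (![(i,i),(k,i),(i,k),(k,k)]) (![(i,i),(k,i),(i,k),(k,k)])))
  simp only [Fin.sum_univ_four, Matrix.cons_val_zero, Matrix.cons_val_one, Matrix.head_cons,
    Matrix.cons_val_two, Matrix.tail_cons, Matrix.cons_val_three, Matrix.head_fin_const] at e1
  simp only [z1, z2, z3, z4, z5, z6, z7, z8, z9, z10, s1, s2] at e1
  have h2 : (∫ p : ProjSp n,
      (projConj (hadU i k hik) p).1 k k * (projConj (hadU i k hik) p).1 k k ∂μ)
      = c2 μ k k k k :=
    integral_comp_projConj hinv _ (fun p : ProjSp n => p.1 k k * p.1 k k)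
      ((meas_entry k k).mul (meas_entry k k))
  have hpt2 : ∀ p : ProjSp n,
      (projConj (hadU i k hik) p).1 k k * (projConj (hadU i k hik) p).1 k k
      = (∑ t : Fin 4, (![(2⁻¹ : ℂ), -2⁻¹, -2⁻¹, 2⁻¹]) t *
          p.1 ((![(i,i),(k,i),(i,k),(k,k)] : Fin 4 → Fin n × Fin n) t).1
            ((![(i,i),(k,i),(i,k),(k,k)] : Fin 4 → Fin n × Fin n) t).2) *
        (∑ t : Fin 4, (![(2⁻¹ : ℂ), -2⁻¹, -2⁻¹, 2⁻¹]) t *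
          p.1 ((![(i,i),(k,i),(i,k),(k,k)] : Fin 4 → Fin n × Fin n) t).1
            ((![(i,i),(k,i),(i,k),(k,k)] : Fin 4 → Fin n × Fin n) t).2) := by
    intro p
    rw [had_vv hik]
    congr 1 <;> · simp [Fin.sum_univ_four]; ring
  have e2 := h2.symm.trans ((integral_congr_ae (Filter.Eventually.of_forall hpt2)).trans
    (integral_lin_mul_lin (μ := μ) (![(2⁻¹ : ℂ), -2⁻¹, -2⁻¹, 2⁻¹])
      (![(2⁻¹ : ℂ), -2⁻¹, -2⁻¹, 2⁻¹])
      (![(i,i),(k,i),(i,k),(k,k)]) (![(i,i),(k,i),(i,k),(k,k)])))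
  simp only [Fin.sum_univ_four, Matrix.cons_val_zero, Matrix.cons_val_one, Matrix.head_cons,
    Matrix.cons_val_two, Matrix.tail_cons, Matrix.cons_val_three, Matrix.head_fin_const] at e2
  simp only [z1, z2, z3, z4, z5, z6, z7, z8, z9, z10, s1, s2] at e2
  constructor
  · linear_combination e1 - e2
  · linear_combination (3/2 : ℂ) * e1 + (1/2 : ℂ) * e2

lemma beta_transfer (hinv : ∀ U : Matrix.unitaryGroup (Fin n) ℂ, Measure.map (projConj U) μ = μ)
    {i k k' : Fin n} (hik : i ≠ k) (hik' : i ≠ k') (hkk' : k ≠ k') :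
    c2 μ i i k k = c2 μ i i k' k' := by
  have z1 : c2 μ i i k' k = 0 := c2_eq_zero hinv (by simp [hik, hik', hkk', Ne.symm hkk'])
  have z2 : c2 μ i i k k' = 0 := c2_eq_zero hinv (by simp [hik, hik', hkk', Ne.symm hkk'])
  have h1 : (∫ p : ProjSp n,
      (projConj (hadU k k' hkk') p).1 i i * (projConj (hadU k k' hkk') p).1 k k ∂μ)
      = c2 μ i i k k :=
    integral_comp_projConj hinv _ (fun p : ProjSp n => p.1 i i * p.1 k k)
      ((meas_entry i i).mul (meas_entry k k))
  have hpt : ∀ p : ProjSp n,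
      (projConj (hadU k k' hkk') p).1 i i * (projConj (hadU k k' hkk') p).1 k k
      = (∑ t : Fin 4, (![(1 : ℂ), 0, 0, 0]) t *
          p.1 ((![(i,i),(i,i),(i,i),(i,i)] : Fin 4 → Fin n × Fin n) t).1
            ((![(i,i),(i,i),(i,i),(i,i)] : Fin 4 → Fin n × Fin n) t).2) *
        (∑ t : Fin 4, (fun _ : Fin 4 => (2⁻¹ : ℂ)) t *
          p.1 ((![(k,k),(k',k),(k,k'),(k',k')] : Fin 4 → Fin n × Fin n) t).1
            ((![(k,k),(k',k),(k,k'),(k',k')] : Fin 4 → Fin n × Fin n) t).2) := by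
    intro p
    rw [had_uu hkk', had_fix hkk' hik hik' hik hik']
    congr 1
    · simp [Fin.sum_univ_four]
    · simp [Fin.sum_univ_four]
      ring
  have e1 := h1.symm.trans ((integral_congr_ae (Filter.Eventually.of_forall hpt)).trans
    (integral_lin_mul_lin (μ := μ) (![(1 : ℂ), 0, 0, 0]) (fun _ : Fin 4 => (2⁻¹ : ℂ))
      (![(i,i),(i,i),(i,i),(i,i)]) (![(k,k),(k',k),(k,k'),(k',k')])))
  simp only [Fin.sum_univ_four, Matrix.cons_val_zero, Matrix.cons_val_one, Matrix.head_cons,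
    Matrix.cons_val_two, Matrix.tail_cons, Matrix.cons_val_three, Matrix.head_fin_const] at e1
  simp only [z1, z2] at e1
  linear_combination 2 * e1

lemma gamma_transfer (hinv : ∀ U : Matrix.unitaryGroup (Fin n) ℂ, Measure.map (projConj U) μ = μ)
    {i k k' : Fin n} (hik : i ≠ k) (hik' : i ≠ k') (hkk' : k ≠ k') :
    c2 μ i k k i = c2 μ i k' k' i := by
  have z1 : c2 μ i k k' i = 0 := c2_eq_zero hinv (by simp [hik, hik', hkk', Ne.symm hkk'])
  have z2 : c2 μ i k' k i = 0 := c2_eq_zero hinv (by simp [hik, hik', hkk', Ne.symm hkk'])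
  have h1 : (∫ p : ProjSp n,
      (projConj (hadU k k' hkk') p).1 i k * (projConj (hadU k k' hkk') p).1 k i ∂μ)
      = c2 μ i k k i :=
    integral_comp_projConj hinv _ (fun p : ProjSp n => p.1 i k * p.1 k i)
      ((meas_entry i k).mul (meas_entry k i))
  have hpt : ∀ p : ProjSp n,
      (projConj (hadU k k' hkk') p).1 i k * (projConj (hadU k k' hkk') p).1 k i
      = (∑ t : Fin 2, (fun _ : Fin 2 => sC) t *
          p.1 ((![(i,k),(i,k')] : Fin 2 → Fin n × Fin n) t).1
            ((![(i,k),(i,k')] : Fin 2 → Fin n × Fin n) t).2) *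
        (∑ t : Fin 2, (fun _ : Fin 2 => sC) t *
          p.1 ((![(k,i),(k',i)] : Fin 2 → Fin n × Fin n) t).1
            ((![(k,i),(k',i)] : Fin 2 → Fin n × Fin n) t).2) := by
    intro p
    rw [had_xu hkk' hik hik', had_ux hkk' hik hik']
    congr 1
    · simp [Fin.sum_univ_two]; ring
    · simp [Fin.sum_univ_two]; ring
  have e1 := h1.symm.trans ((integral_congr_ae (Filter.Eventually.of_forall hpt)).trans
    (integral_lin_mul_lin (μ := μ) (fun _ : Fin 2 => sC) (fun _ : Fin 2 => sC)
      (![(i,k),(i,k')]) (![(k,i),(k',i)])))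
  simp only [Fin.sum_univ_two, Matrix.cons_val_zero, Matrix.cons_val_one, Matrix.head_cons] at e1
  simp only [sC_mul_sC, z1, z2] at e1
  linear_combination 2 * e1

lemma pair_all (F : Fin n → Fin n → ℂ)
    (Fsymm : ∀ i k, i ≠ k → F i k = F k i)
    (Ftrans : ∀ i k k', i ≠ k → i ≠ k' → k ≠ k' → F i k = F i k') :
    ∀ i k i' k', i ≠ k → i' ≠ k' → F i k = F i' k' := by
  intro i k i' k' hik hi'k'
  by_cases hii' : i = i'
  · subst hii'
    by_cases hkk' : k = k'
    · rw [hkk']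
    · exact Ftrans i k k' hik hi'k' hkk'
  · by_cases hki' : k = i'
    · subst hki'
      by_cases hik'2 : i = k'
      · rw [Fsymm i k hik, ← hik'2]
      · rw [Ftrans i k k' hik hik'2 hi'k']
        rw [Fsymm i k' hik'2, Ftrans k' i k (fun h => hik'2 h.symm) (fun h => hi'k' h.symm) hik,
          Fsymm k' k (fun h => hi'k' h.symm)]
    · rw [Fsymm i k hik, Ftrans k i i' (fun h => hik h.symm) hki' hii', Fsymm k i' hki']
      by_cases hkk' : k = k'
      · rw [hkk']
      · exact Ftrans i' k k' (fun h => hki' h.symm) hi'k' hkk'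

lemma c2_formula (hinv : ∀ U : Matrix.unitaryGroup (Fin n) ℂ, Measure.map (projConj U) μ = μ)
    (hn : 1 ≤ n) (i j k l : Fin n) :
    c2 μ i j k l = ((if i = l then (1:ℂ) else 0) * (if j = k then 1 else 0)
      + (if i = j then (1:ℂ) else 0) * (if k = l then 1 else 0)) / ((n:ℂ) * ((n:ℂ)+1)) := by
  by_cases hn2 : 2 ≤ n
  · -- main case n ≥ 2
    have h0 : 0 < n := by omega
    have h1 : 1 < n := by omega
    set i0 : Fin n := ⟨0, h0⟩ with hi0
    set i1 : Fin n := ⟨1, h1⟩ with hi1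
    have h01 : i0 ≠ i1 := by simp [hi0, hi1, Fin.ext_iff]
    have hmall : ∀ a : Fin n, m1 μ a a = m1 μ i0 i0 := by
      intro a
      by_cases h : a = i0
      · rw [h]
      · exact m_diag_eq hinv h
    have hmsum : (n : ℂ) * m1 μ i0 i0 = 1 := by
      have hsum := m_sum (μ := μ)
      rw [Finset.sum_congr rfl (fun a _ => hmall a)] at hsum
      rw [Finset.sum_const, Finset.card_univ, Fintype.card_fin, nsmul_eq_mul] at hsum
      exact hsum
    have hαall : ∀ a : Fin n, c2 μ a a a a = c2 μ i0 i0 i0 i0 := by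
      intro a
      by_cases h : a = i0
      · rw [h]
      · exact (alpha_rel hinv h).1
    have hβ : ∀ a b : Fin n, a ≠ b → c2 μ a a b b = c2 μ i0 i0 i1 i1 := by
      intro a b h
      exact pair_all (fun x y => c2 μ x x y y) (fun x y _ => c2_comm x x y y)
        (fun x y y' h1' h2' h3' => beta_transfer hinv h1' h2' h3') a b i0 i1 h h01
    have hγ : ∀ a b : Fin n, a ≠ b → c2 μ a b b a = c2 μ i0 i1 i1 i0 := by
      intro a b h
      exact pair_all (fun x y => c2 μ x y y x) (fun x y _ => c2_comm x y y x)
        (fun x y y' h1' h2' h3' => gamma_transfer hinv h1' h2' h3') a b i0 i1 h h01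
    have hs1 : c2 μ i0 i0 i0 i0 + ((n:ℂ) - 1) * c2 μ i0 i0 i1 i1 = m1 μ i0 i0 := by
      have h := sum1 (μ := μ) i0
      rw [← Finset.add_sum_erase Finset.univ _ (Finset.mem_univ i0)] at h
      rw [Finset.sum_congr rfl (fun b hb => hβ i0 b
        (Ne.symm (Finset.mem_erase.mp hb).1))] at h
      rw [Finset.sum_const, Finset.card_erase_of_mem (Finset.mem_univ i0),
        Finset.card_univ, Fintype.card_fin, nsmul_eq_mul] at h
      rw [show (((n - 1 : ℕ)) : ℂ) = (n : ℂ) - 1 by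
        push_cast [Nat.cast_sub (by omega : 1 ≤ n)]; ring] at h
      exact h
    have hs2 : c2 μ i0 i0 i0 i0 + ((n:ℂ) - 1) * c2 μ i0 i1 i1 i0 = m1 μ i0 i0 := by
      have h := sum2 (μ := μ) i0
      rw [← Finset.add_sum_erase Finset.univ _ (Finset.mem_univ i0)] at h
      rw [Finset.sum_congr rfl (fun b hb => hγ i0 b
        (Ne.symm (Finset.mem_erase.mp hb).1))] at h
      rw [Finset.sum_const, Finset.card_erase_of_mem (Finset.mem_univ i0),
        Finset.card_univ, Fintype.card_fin, nsmul_eq_mul] at h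
      rw [show (((n - 1 : ℕ)) : ℂ) = (n : ℂ) - 1 by
        push_cast [Nat.cast_sub (by omega : 1 ≤ n)]; ring] at h
      exact h
    have hαβγ : c2 μ i0 i0 i0 i0 = c2 μ i0 i0 i1 i1 + c2 μ i0 i1 i1 i0 :=
      (alpha_rel hinv h01).2
    have hn1ne : ((n:ℂ) - 1) ≠ 0 := by
      intro h
      have h' : (n:ℂ) = ((1 : ℕ) : ℂ) := by push_cast; linear_combination h
      have := Nat.cast_injective (R := ℂ) h'
      omega
    have hβγ : c2 μ i0 i0 i1 i1 = c2 μ i0 i1 i1 i0 := by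
      have h0' : ((n:ℂ) - 1) * (c2 μ i0 i0 i1 i1 - c2 μ i0 i1 i1 i0) = 0 := by
        linear_combination hs1 - hs2
      rcases mul_eq_zero.mp h0' with h' | h'
      · exact absurd h' hn1ne
      · linear_combination h'
    have hα2 : c2 μ i0 i0 i0 i0 = 2 * c2 μ i0 i0 i1 i1 := by
      linear_combination hαβγ - hβγ
    have hval : ((n:ℂ) * ((n:ℂ)+1)) * c2 μ i0 i0 i1 i1 = 1 := by
      linear_combination (n:ℂ) * hs1 - (n:ℂ) * hα2 + hmsum
    have hD : ((n:ℂ) * ((n:ℂ)+1)) ≠ 0 := by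
      intro h
      rw [h] at hval
      simp at hval
    have hβval : c2 μ i0 i0 i1 i1 = 1 / ((n:ℂ) * ((n:ℂ)+1)) := by
      field_simp
      linear_combination hval
    by_cases hij : i = j
    · subst hij
      by_cases hkl : k = l
      · subst hkl
        by_cases hikk : i = k
        · subst hikk
          simp only [eq_self_iff_true, if_true]
          rw [hαall i, hα2, hβval]
          ring
        · simp only [if_neg hikk, eq_self_iff_true, if_true]
          rw [hβ i k hikk, hβval]
          ring
      · rw [c2_eq_zero hinv (by
          rintro (⟨-, h'⟩ | ⟨h1', h2'⟩)
          · exact hkl h'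
          · exact hkl (h2'.symm.trans h1'))]
        simp only [if_neg hkl, mul_zero, add_zero]
        by_cases hil : i = l
        · have hik2 : ¬ i = k := fun h' => hkl (h'.symm.trans hil)
          simp [hik2]
        · simp [hil]
    · by_cases hil : i = l
      · by_cases hjk : j = k
        · subst hil
          subst hjk
          simp only [eq_self_iff_true, if_true, if_neg hij,
            if_neg (fun h' : j = i => hij h'.symm)]
          rw [hγ i j hij, ← hβγ, hβval]
          ring
        · rw [c2_eq_zero hinv (by
            rintro (⟨h', -⟩ | ⟨-, h'⟩)
            · exact hij h'
            · exact hjk h')]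
          simp [hij, hjk]
      · rw [c2_eq_zero hinv (by
          rintro (⟨h', -⟩ | ⟨h', -⟩)
          · exact hij h'
          · exact hil h')]
        simp [hij, hil]
  · -- n = 1
    have hn1 : n = 1 := by omega
    subst hn1
    have hone : ∀ (p : ProjSp 1) (a b : Fin 1), p.1 a b = 1 := by
      intro p a b
      have htr := p.2.2.2
      rw [Matrix.trace, Fin.sum_univ_one] at htr
      rw [Subsingleton.elim a 0, Subsingleton.elim b 0]
      exact htr
    have hc : c2 μ i j k l = 1 := by
      unfold c2
      rw [integral_congr_ae (Filter.Eventually.of_forall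
        (fun p : ProjSp 1 => by rw [hone p i j, hone p k l, one_mul]))]
      simp
    rw [hc, Subsingleton.elim l i, Subsingleton.elim j i, Subsingleton.elim k i]
    norm_num

end TIF

/-- Trace-integral formula: for any operators `A, B` on `ℂⁿ`,
`∫ conj(F_A) F_B dμₙ = (tr(A*B) + tr(A*) tr(B)) / (n(n+1))`, where `F_A(p) = tr(pA)` and
`μₙ` is the (unique) `U(n)`-invariant probability measure on projective space. -/
theorem integral_conj_frame_mul_frame (n : ℕ) (A B : Matrix (Fin n) (Fin n) ℂ)
    (μ : Measure (ProjSp n)) [IsProbabilityMeasure μ]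
    (hinv : ∀ U : Matrix.unitaryGroup (Fin n) ℂ, Measure.map (projConj U) μ = μ) :
    ∫ p : ProjSp n, (starRingEnd ℂ) ((p.1 * A).trace) * (p.1 * B).trace ∂μ =
      ((Aᴴ * B).trace + (Aᴴ).trace * B.trace) / ((n : ℂ) * ((n : ℂ) + 1)) := by
  rcases Nat.eq_zero_or_pos n with hn0 | hn
  · subst hn0
    have hempty : IsEmpty (ProjSp 0) := ⟨fun p => by
      have htr := p.2.2.2
      rw [Matrix.trace] at htr
      simp at htr⟩
    have h1 : μ Set.univ = 1 := measure_univ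
    rw [Set.univ_eq_empty_iff.mpr hempty, measure_empty] at h1
    exact absurd h1 (by simp)
  · have hn1 : 1 ≤ n := hn
    have h2 : ∀ (p : ProjSp n) (X : Matrix (Fin n) (Fin n) ℂ),
        (p.1 * X).trace = ∑ t : Fin n × Fin n, X t.2 t.1 * p.1 t.1 t.2 := by
      intro p X
      rw [Matrix.trace, Fintype.sum_prod_type]
      simp only [Matrix.diag, Matrix.mul_apply]
      exact Finset.sum_congr rfl fun a _ => Finset.sum_congr rfl fun b _ => mul_comm _ _
    have hconjtr : ∀ p : ProjSp n,
        (starRingEnd ℂ) ((p.1 * A).trace) = (p.1 * Aᴴ).trace := by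
      intro p
      have hh : ((p.1 * A)ᴴ).trace = star ((p.1 * A).trace) := Matrix.trace_conjTranspose _
      have hh2 : ((p.1 * A)ᴴ).trace = (p.1 * Aᴴ).trace := by
        rw [Matrix.conjTranspose_mul, p.2.1.1, Matrix.trace_mul_comm]
      calc (starRingEnd ℂ) ((p.1 * A).trace) = star ((p.1 * A).trace) := rfl
        _ = ((p.1 * A)ᴴ).trace := hh.symm
        _ = (p.1 * Aᴴ).trace := hh2
    have hpt : ∀ p : ProjSp n, (starRingEnd ℂ) ((p.1 * A).trace) * (p.1 * B).trace
        = (∑ t : Fin n × Fin n, (fun t : Fin n × Fin n => Aᴴ t.2 t.1) t *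
            p.1 ((fun t : Fin n × Fin n => t) t).1 ((fun t : Fin n × Fin n => t) t).2) *
          (∑ t : Fin n × Fin n, (fun t : Fin n × Fin n => B t.2 t.1) t *
            p.1 ((fun t : Fin n × Fin n => t) t).1 ((fun t : Fin n × Fin n => t) t).2) := by
      intro p
      rw [hconjtr p, h2 p Aᴴ, h2 p B]
    have key : ∑ t : Fin n × Fin n, ∑ u : Fin n × Fin n,
        (Aᴴ t.2 t.1 * B u.2 u.1) *
          ((if t.1 = u.2 then (1:ℂ) else 0) * (if t.2 = u.1 then 1 else 0)
            + (if t.1 = t.2 then (1:ℂ) else 0) * (if u.1 = u.2 then 1 else 0))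
        = (Aᴴ * B).trace + (Aᴴ).trace * B.trace := by
      simp only [mul_add, Finset.sum_add_distrib]
      congr 1
      · have inner : ∀ t : Fin n × Fin n, (∑ u : Fin n × Fin n, (Aᴴ t.2 t.1 * B u.2 u.1) *
            ((if t.1 = u.2 then (1:ℂ) else 0) * (if t.2 = u.1 then 1 else 0)))
            = Aᴴ t.2 t.1 * B t.1 t.2 := by
          intro t
          rw [Finset.sum_eq_single (t.2, t.1)]
          · simp
          · intro u _ hu
            by_cases hx1 : t.1 = u.2
            · by_cases hx2 : t.2 = u.1
              · exact absurd (Prod.ext hx2.symm hx1.symm) hu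
              · simp [hx2]
            · simp [hx1]
          · simp
        simp only [inner]
        rw [Matrix.trace, Fintype.sum_prod_type]
        rw [Finset.sum_comm]
        simp only [Matrix.diag, Matrix.mul_apply]
      · have step : ∀ t u : Fin n × Fin n, (Aᴴ t.2 t.1 * B u.2 u.1) *
            ((if t.1 = t.2 then (1:ℂ) else 0) * (if u.1 = u.2 then 1 else 0))
            = (Aᴴ t.2 t.1 * (if t.1 = t.2 then (1:ℂ) else 0)) *
              (B u.2 u.1 * (if u.1 = u.2 then (1:ℂ) else 0)) := fun t u => by ring
        simp only [step]
        rw [← Finset.sum_mul_sum]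
        congr 1
        · rw [Matrix.trace, Fintype.sum_prod_type]
          simp [Matrix.diag, mul_ite, mul_one, mul_zero, Finset.sum_ite_eq]
        · rw [Matrix.trace, Fintype.sum_prod_type]
          simp [Matrix.diag, mul_ite, mul_one, mul_zero, Finset.sum_ite_eq]
    have hint := (integral_congr_ae (μ := μ) (Filter.Eventually.of_forall hpt)).trans
      (TIF.integral_lin_mul_lin (μ := μ) (fun t : Fin n × Fin n => Aᴴ t.2 t.1)
        (fun t : Fin n × Fin n => B t.2 t.1) (fun t => t) (fun t => t))
    calc ∫ p : ProjSp n, (starRingEnd ℂ) ((p.1 * A).trace) * (p.1 * B).trace ∂μ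
        = ∑ t : Fin n × Fin n, ∑ u : Fin n × Fin n,
            ((fun t : Fin n × Fin n => Aᴴ t.2 t.1) t * (fun t : Fin n × Fin n => B t.2 t.1) u) *
              TIF.c2 μ ((fun t : Fin n × Fin n => t) t).1 ((fun t : Fin n × Fin n => t) t).2
                ((fun t : Fin n × Fin n => t) u).1 ((fun t : Fin n × Fin n => t) u).2 := hint
      _ = ∑ t : Fin n × Fin n, ∑ u : Fin n × Fin n,
            (Aᴴ t.2 t.1 * B u.2 u.1) *
              (((if t.1 = u.2 then (1:ℂ) else 0) * (if t.2 = u.1 then 1 else 0)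
                + (if t.1 = t.2 then (1:ℂ) else 0) * (if u.1 = u.2 then 1 else 0))
                / ((n : ℂ) * ((n : ℂ) + 1))) := by
          refine Finset.sum_congr rfl fun t _ => Finset.sum_congr rfl fun u _ => ?_
          show (Aᴴ t.2 t.1 * B u.2 u.1) * TIF.c2 μ t.1 t.2 u.1 u.2 = _
          rw [TIF.c2_formula hinv hn1 t.1 t.2 u.1 u.2]
      _ = (∑ t : Fin n × Fin n, ∑ u : Fin n × Fin n,
            (Aᴴ t.2 t.1 * B u.2 u.1) *
              ((if t.1 = u.2 then (1:ℂ) else 0) * (if t.2 = u.1 then 1 else 0)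
                + (if t.1 = t.2 then (1:ℂ) else 0) * (if u.1 = u.2 then 1 else 0)))
            / ((n : ℂ) * ((n : ℂ) + 1)) := by
          simp only [← mul_div_assoc, ← Finset.sum_div]
      _ = ((Aᴴ * B).trace + (Aᴴ).trace * B.trace) / ((n : ℂ) * ((n : ℂ) + 1)) := by
          rw [key]
end
end

section
/- For operators A, B on an n-dimensional complex Hilbert space: tr(A*B) = n(n+1)∫ conj(F_A) F_B dμₙ − n² (∫ conj(F_A) dμₙ)(∫ F_B dμₙ), where F_A(p) = tr(pA) and μₙ is the U(n)-invariant probability measure on projective space. -/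
open Matrix MeasureTheory
open scoped ComplexOrder
noncomputable section

namespace TrAux
variable {n : ℕ}

lemma herm (p : ProjSp n) : p.1ᴴ = p.1 := p.2.1.isHermitian

lemma entry_conj (p : ProjSp n) (i j : Fin n) :
    (starRingEnd ℂ) (p.1 i j) = p.1 j i := by
  conv_rhs => rw [← herm p]
  rfl

lemma diag_nonneg (p : ProjSp n) (i : Fin n) : 0 ≤ p.1 i i := by
  have := p.2.1.dotProduct_mulVec_nonneg (Pi.single i 1)
  simpa [dotProduct, Matrix.mulVec, Pi.single_apply, Pi.star_apply,
    apply_ite (star : ℂ → ℂ), ite_mul, Finset.sum_ite_eq', mul_ite] using this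

lemma diag_im (p : ProjSp n) (i : Fin n) : (p.1 i i).im = 0 :=
  ((Complex.nonneg_iff.mp (diag_nonneg p i)).2).symm

lemma diag_re_nonneg (p : ProjSp n) (i : Fin n) : 0 ≤ (p.1 i i).re :=
  (Complex.nonneg_iff.mp (diag_nonneg p i)).1

lemma diag_eq_re (p : ProjSp n) (i : Fin n) : p.1 i i = ((p.1 i i).re : ℂ) := by
  exact Complex.ext rfl (by simp [diag_im p i])

lemma sum_diag_re (p : ProjSp n) : ∑ i, (p.1 i i).re = 1 := by
  have h := p.2.2.2
  have : (p.1.trace).re = 1 := by rw [h]; simp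
  simpa [Matrix.trace, Matrix.diag, Complex.re_sum] using this

/-- row norm identity: `∑ k, normSq (p i k) = re (p i i)` -/
lemma row_normSq (p : ProjSp n) (i : Fin n) :
    ∑ k, Complex.normSq (p.1 i k) = (p.1 i i).re := by
  have h : (p.1 * p.1) i i = p.1 i i := by rw [p.2.2.1]
  have h2 : ∑ k, p.1 i k * p.1 k i = p.1 i i := by
    simpa [Matrix.mul_apply] using h
  have h3 : ∑ k, ((Complex.normSq (p.1 i k) : ℂ)) = p.1 i i := by
    rw [← h2]
    refine Finset.sum_congr rfl fun k _ => ?_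
    rw [← entry_conj p i k, Complex.mul_conj]
  have := congrArg Complex.re h3
  simpa [Complex.re_sum] using this

lemma I_ne_one : Complex.I ≠ 1 := by
  intro h
  have := congrArg Complex.im h
  simp at this

lemma neg_I_ne_one : (-Complex.I : ℂ) ≠ 1 := by
  intro h
  have := congrArg Complex.im h
  simp at this

lemma neg_one_ne_one : (-1 : ℂ) ≠ 1 := by norm_num
/-- Cauchy–Schwarz for PSD matrices: `normSq (p i k) ≤ re (p i i) * re (p k k)`. -/
lemma cs_ineq (p : ProjSp n) (i k : Fin n) (hik : i ≠ k) :
    Complex.normSq (p.1 i k) ≤ (p.1 i i).re * (p.1 k k).re := by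
  set s := Complex.normSq (p.1 i k) with hs
  have key : ∀ t : ℝ, 0 ≤ (p.1 k k).re * (t * t) + (2 * s) * t + s * (p.1 i i).re := by
    intro t
    have h := p.2.1.dotProduct_mulVec_nonneg (fun b => if b = i then p.1 i k else if b = k then (t : ℂ) else 0)
    have h2 : p.1 i k * (starRingEnd ℂ) (p.1 i k) = (s:ℂ) := by
      rw [Complex.mul_conj, hs]
    have hx : (star (fun b => if b = i then p.1 i k else if b = k then (t : ℂ) else 0)) ⬝ᵥ
        (p.1 *ᵥ (fun b => if b = i then p.1 i k else if b = k then (t : ℂ) else 0)) =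
        (s : ℂ) * p.1 i i + 2 * (t : ℂ) * s + (t : ℂ) ^ 2 * p.1 k k := by
      have expand : ∀ b, (p.1 *ᵥ (fun b => if b = i then p.1 i k else if b = k then (t:ℂ) else 0)) b
          = p.1 b i * p.1 i k + p.1 b k * (t : ℂ) := by
        intro b
        simp only [Matrix.mulVec, dotProduct, mul_ite, mul_zero]
        rw [Finset.sum_eq_add i k hik]
        · simp [hik, hik.symm]
        · intro c _ hc; simp [hc.1, hc.2]
        · simp
        · simp
      simp only [dotProduct, Pi.star_apply, expand]
      rw [Finset.sum_eq_add i k hik]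
      · have hki : p.1 k i = (starRingEnd ℂ) (p.1 i k) := (entry_conj p i k).symm
        simp only [eq_self_iff_true, if_true, if_neg hik, if_neg hik.symm,
          Complex.star_def, Complex.conj_ofReal, hki]
        linear_combination (p.1 i i + 2 * (t:ℂ)) * h2
      · intro c _ hc
        simp [hc.1, hc.2]
      · simp
      · simp
    rw [hx] at h
    have hre := (Complex.nonneg_iff.mp h).1
    have him : ((s : ℂ) * p.1 i i + 2 * (t : ℂ) * s + (t : ℂ) ^ 2 * p.1 k k).re
        = s * (p.1 i i).re + 2 * t * s + t ^ 2 * (p.1 k k).re := by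
      simp [Complex.add_re, Complex.mul_re, Complex.ofReal_re, Complex.ofReal_im, diag_im,
        pow_two, Complex.mul_im]
      try ring
    rw [him] at hre
    nlinarith [hre]
  have hd := discrim_le_zero key
  rw [discrim] at hd
  rcases eq_or_lt_of_le (Complex.normSq_nonneg (p.1 i k)) with h0 | hpos
  · rw [← hs] at h0
    rw [← h0]
    exact mul_nonneg (diag_re_nonneg p i) (diag_re_nonneg p k)
  · rw [← hs] at hpos
    nlinarith [hd, hpos]

/-- The rank-one identity: all 2×2 minors of `p` vanish. -/
lemma minor_eq (p : ProjSp n) (i k : Fin n) :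
    (p.1 i i).re * (p.1 k k).re = Complex.normSq (p.1 i k) := by
  have total : ∑ i, ∑ k, ((p.1 i i).re * (p.1 k k).re - Complex.normSq (p.1 i k)) = 0 := by
    have h1 : ∑ i, ∑ k, (p.1 i i).re * (p.1 k k).re = 1 := by
      rw [← Finset.sum_mul_sum]
      simp [sum_diag_re p]
    have h2 : ∑ i : Fin n, ∑ k, Complex.normSq (p.1 i k) = 1 := by
      simp only [row_normSq p]
      exact sum_diag_re p
    simp [Finset.sum_sub_distrib, h1, h2]
  have nonneg : ∀ x : Fin n × Fin n, 0 ≤ (p.1 x.1 x.1).re * (p.1 x.2 x.2).re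
      - Complex.normSq (p.1 x.1 x.2) := by
    rintro ⟨a, b⟩
    rcases eq_or_ne a b with rfl | hab
    · have : Complex.normSq (p.1 a a) = (p.1 a a).re * (p.1 a a).re := by
        rw [Complex.normSq_apply, diag_im p a]; ring
      simp [this]
    · linarith [cs_ineq p a b hab]
  have total' : ∑ x ∈ (Finset.univ : Finset (Fin n × Fin n)),
      ((p.1 x.1 x.1).re * (p.1 x.2 x.2).re - Complex.normSq (p.1 x.1 x.2)) = 0 := by
    rw [← Finset.univ_product_univ, Finset.sum_product]
    exact total
  have := (Finset.sum_eq_zero_iff_of_nonneg (fun x _ => nonneg x)).mp total' (i, k) (by simp)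
  linarith [this]

/-- Entrywise rank-one identity in ℂ : `p_ii p_kk = p_ik p_ki`. -/
lemma minor_eq_c (p : ProjSp n) (i k : Fin n) :
    p.1 i i * p.1 k k = p.1 i k * p.1 k i := by
  have h1 : p.1 i k * p.1 k i = (Complex.normSq (p.1 i k) : ℂ) := by
    rw [← entry_conj p i k, Complex.mul_conj]
  rw [h1, diag_eq_re p i, diag_eq_re p k, ← Complex.ofReal_mul, minor_eq p i k]
lemma measurable_entry (i j : Fin n) : Measurable (fun p : ProjSp n => p.1 i j) := by
  have : (fun p : ProjSp n => p.1 i j)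
      = (fun f : Fin n → ℂ => f j) ∘ (fun M : Matrix (Fin n) (Fin n) ℂ => M i) ∘ Subtype.val :=
    rfl
  rw [this]
  exact (measurable_pi_apply j).comp ((measurable_pi_apply i).comp measurable_subtype_coe)

lemma entry_bound (p : ProjSp n) (i j : Fin n) : ‖p.1 i j‖ ≤ 1 := by
  have h1 : Complex.normSq (p.1 i j) ≤ (p.1 i i).re := by
    rw [← row_normSq p i]
    exact Finset.single_le_sum (f := fun k => Complex.normSq (p.1 i k))
      (fun k _ => Complex.normSq_nonneg _) (Finset.mem_univ j)
  have h2 : (p.1 i i).re ≤ 1 := by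
    rw [← sum_diag_re p]
    exact Finset.single_le_sum (fun k _ => diag_re_nonneg p k) (Finset.mem_univ i)
  have h3 : ‖p.1 i j‖ ^ 2 ≤ 1 := by
    have : ‖p.1 i j‖ ^ 2 = Complex.normSq (p.1 i j) := by
      rw [Complex.normSq_eq_norm_sq]
    linarith [this]
  nlinarith [norm_nonneg (p.1 i j)]

variable (μ : Measure (ProjSp n)) [IsProbabilityMeasure μ]

lemma integrable_entry (i j : Fin n) : Integrable (fun p : ProjSp n => p.1 i j) μ := by
  refine Integrable.mono' (integrable_const 1) (measurable_entry i j).aestronglyMeasurable ?_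
  exact Filter.Eventually.of_forall fun p => entry_bound p i j

lemma integrable_entry_mul (i j k l : Fin n) :
    Integrable (fun p : ProjSp n => p.1 i j * p.1 k l) μ := by
  refine Integrable.mono' (integrable_const 1)
    ((measurable_entry i j).mul (measurable_entry k l)).aestronglyMeasurable ?_
  refine Filter.Eventually.of_forall fun p => ?_
  rw [norm_mul]
  calc ‖p.1 i j‖ * ‖p.1 k l‖ ≤ 1 * 1 :=
        mul_le_mul (entry_bound p i j) (entry_bound p k l) (norm_nonneg _) zero_le_one
    _ = 1 := one_mul 1

lemma measurable_projConj (U : Matrix.unitaryGroup (Fin n) ℂ) :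
    Measurable (projConj U : ProjSp n → ProjSp n) := by
  apply Measurable.subtype_mk
  apply measurable_pi_lambda
  intro i
  apply measurable_pi_lambda
  intro j
  simp only [Matrix.mul_apply]
  apply Finset.measurable_sum
  intro b _
  apply Measurable.mul_const
  apply Finset.measurable_sum
  intro a _
  exact (measurable_entry a b).const_mul _
lemma integral_inv (hinv : ∀ U : Matrix.unitaryGroup (Fin n) ℂ, Measure.map (projConj U) μ = μ)
    (U : Matrix.unitaryGroup (Fin n) ℂ) {f : ProjSp n → ℂ}
    (hf : AEStronglyMeasurable f μ) :
    ∫ p, f (projConj U p) ∂μ = ∫ p, f p ∂μ := by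
  conv_rhs => rw [← hinv U]
  rw [integral_map (measurable_projConj U).aemeasurable (by rw [hinv U]; exact hf)]

/-- The diagonal unitary with `I` at position `a` and `1` elsewhere. -/
def phaseU (a : Fin n) : Matrix.unitaryGroup (Fin n) ℂ :=
  ⟨Matrix.diagonal (fun b => if b = a then Complex.I else 1), by
    rw [Matrix.mem_unitaryGroup_iff, Matrix.star_eq_conjTranspose,
      Matrix.diagonal_conjTranspose, Matrix.diagonal_mul_diagonal]
    convert Matrix.diagonal_one
    rename_i b
    rcases eq_or_ne b a with rfl | hb
    · simp [Complex.mul_conj]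
    · simp [hb]⟩

lemma phaseU_entry (a : Fin n) (p : ProjSp n) (i j : Fin n) :
    (projConj (phaseU a) p).1 i j =
      (if i = a then Complex.I else 1) * p.1 i j *
        (starRingEnd ℂ) (if j = a then Complex.I else 1) := by
  show ((Matrix.diagonal _ : Matrix (Fin n) (Fin n) ℂ) * p.1 *
      star (Matrix.diagonal (fun b => if b = a then Complex.I else 1))) i j = _
  rw [Matrix.star_eq_conjTranspose, Matrix.diagonal_conjTranspose, Matrix.mul_diagonal,
    Matrix.diagonal_mul]
  simp only [Pi.star_apply, Complex.star_def]
  try ring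
/-- first moment -/
def M1 (μ : Measure (ProjSp n)) (i j : Fin n) : ℂ := ∫ p : ProjSp n, p.1 i j ∂μ

/-- second moment -/
def M2 (μ : Measure (ProjSp n)) (i j k l : Fin n) : ℂ := ∫ p : ProjSp n, p.1 i j * p.1 k l ∂μ

variable (hinv : ∀ U : Matrix.unitaryGroup (Fin n) ℂ, Measure.map (projConj U) μ = μ)

section
include hinv

lemma m1_phase (a i j : Fin n) :
    M1 μ i j = ((if i = a then Complex.I else 1) *
      (starRingEnd ℂ) (if j = a then Complex.I else 1)) * M1 μ i j := by
  have h := integral_inv μ hinv (phaseU a) (f := fun p : ProjSp n => p.1 i j)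
    (measurable_entry i j).aestronglyMeasurable
  calc M1 μ i j = ∫ p : ProjSp n, (projConj (phaseU a) p).1 i j ∂μ := h.symm
    _ = ∫ p : ProjSp n, ((if i = a then Complex.I else 1) *
          (starRingEnd ℂ) (if j = a then Complex.I else 1)) * p.1 i j ∂μ := by
        congr 1; funext p; rw [phaseU_entry]; ring
    _ = _ := integral_const_mul _ _

lemma m2_phase (a i j k l : Fin n) :
    M2 μ i j k l = ((if i = a then Complex.I else 1) *
      (starRingEnd ℂ) (if j = a then Complex.I else 1) *
      (if k = a then Complex.I else 1) *
      (starRingEnd ℂ) (if l = a then Complex.I else 1)) * M2 μ i j k l := by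
  have h := integral_inv μ hinv (phaseU a)
    (f := fun p : ProjSp n => p.1 i j * p.1 k l)
    ((measurable_entry i j).mul (measurable_entry k l)).aestronglyMeasurable
  calc M2 μ i j k l = ∫ p : ProjSp n,
        (projConj (phaseU a) p).1 i j * (projConj (phaseU a) p).1 k l ∂μ := h.symm
    _ = ∫ p : ProjSp n, ((if i = a then Complex.I else 1) *
          (starRingEnd ℂ) (if j = a then Complex.I else 1) *
          (if k = a then Complex.I else 1) *
          (starRingEnd ℂ) (if l = a then Complex.I else 1)) * (p.1 i j * p.1 k l) ∂μ := by
        congr 1; funext p; rw [phaseU_entry, phaseU_entry]; ring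
    _ = _ := integral_const_mul _ _

lemma m1_offdiag {i j : Fin n} (hij : i ≠ j) : M1 μ i j = 0 := by
  have h := m1_phase μ hinv i i j
  rw [if_pos rfl, if_neg (Ne.symm hij)] at h
  simp only [_root_.map_one, mul_one] at h
  have : (1 - Complex.I) * M1 μ i j = 0 := by linear_combination h
  rcases mul_eq_zero.mp this with h1 | h2
  · exfalso
    rw [sub_eq_zero] at h1
    exact I_ne_one h1.symm
  · exact h2

lemma m2_zero {i j k l : Fin n} (h : ¬((i = j ∧ k = l) ∨ (i = l ∧ j = k))) :
    M2 μ i j k l = 0 := by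
  rw [not_or] at h
  obtain ⟨h1, h2⟩ := h
  -- find a phase factor ≠ 1
  obtain ⟨F, hrel, hF⟩ : ∃ F : ℂ, M2 μ i j k l = F * M2 μ i j k l ∧ F ≠ 1 := by
    rcases eq_or_ne i j with rfl | hij
    · -- i = j; then k ≠ l
      have hkl : k ≠ l := fun hkl => h1 ⟨rfl, hkl⟩
      refine ⟨_, m2_phase μ hinv k i i k l, ?_⟩
      rcases eq_or_ne i k with rfl | hik
      · simpa [Ne.symm hkl] using I_ne_one
      · simpa [hik, Ne.symm hkl] using I_ne_one
    · rcases eq_or_ne i l with rfl | hil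
      · -- i = l, i ≠ j, so j ≠ k
        have hjk : j ≠ k := fun hjk => h2 ⟨rfl, hjk⟩
        refine ⟨_, m2_phase μ hinv j i j k i, ?_⟩
        simpa [hij, Ne.symm hjk] using neg_I_ne_one
      · -- i ≠ j, i ≠ l : use a = i
        refine ⟨_, m2_phase μ hinv i i j k l, ?_⟩
        rcases eq_or_ne k i with rfl | hki
        · simpa [Ne.symm hij, Ne.symm hil, Complex.ext_iff] using neg_one_ne_one
        · simpa [hki, Ne.symm hij, Ne.symm hil] using I_ne_one
  have : (1 - F) * M2 μ i j k l = 0 := by linear_combination hrel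
  rcases mul_eq_zero.mp this with hA | hB
  · exact absurd (by linear_combination -hA : F = 1) hF
  · exact hB

end
/-! ### Permutation unitaries -/

lemma permM_star (σ : Equiv.Perm (Fin n)) :
    star (σ.permMatrix ℂ) = (σ⁻¹).permMatrix ℂ := by
  rw [Matrix.star_eq_conjTranspose]
  ext a b
  rw [Matrix.conjTranspose_apply]
  simp only [Equiv.Perm.permMatrix, PEquiv.toMatrix_apply, Equiv.toPEquiv_apply,
    Option.mem_def, Option.some.injEq]
  rw [apply_ite (star : ℂ → ℂ)]
  simp only [star_one, star_zero]
  congr 1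
  simp only [eq_iff_iff]
  constructor
  · rintro rfl; simp
  · rintro rfl; simp

lemma permM_mem (σ : Equiv.Perm (Fin n)) :
    σ.permMatrix ℂ ∈ Matrix.unitaryGroup (Fin n) ℂ := by
  rw [Matrix.mem_unitaryGroup_iff, permM_star, Equiv.Perm.permMatrix, Equiv.Perm.permMatrix,
    ← PEquiv.toMatrix_trans, ← Equiv.toPEquiv_trans]
  have : σ.trans σ⁻¹ = Equiv.refl (Fin n) := by
    ext x; simp
  rw [this, Equiv.toPEquiv_refl, PEquiv.toMatrix_refl]

/-- the permutation unitary -/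
def permU (σ : Equiv.Perm (Fin n)) : Matrix.unitaryGroup (Fin n) ℂ :=
  ⟨σ.permMatrix ℂ, permM_mem σ⟩

lemma permU_entry (σ : Equiv.Perm (Fin n)) (p : ProjSp n) (a b : Fin n) :
    (projConj (permU σ) p).1 a b = p.1 (σ a) (σ b) := by
  show ((σ.permMatrix ℂ) * p.1 * star (σ.permMatrix ℂ)) a b = _
  rw [permM_star, Equiv.Perm.permMatrix, Equiv.Perm.permMatrix,
    PEquiv.toMatrix_toPEquiv_mul, PEquiv.mul_toMatrix_toPEquiv]
  simp [Equiv.Perm.inv_def]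

/-! ### Rotation unitaries -/

/-- `1/√2` -/
def rc : ℝ := (Real.sqrt 2)⁻¹

lemma rc2 : (rc : ℂ) * (rc : ℂ) = 1 / 2 := by
  have h : (rc : ℝ) * rc = 1 / 2 := by
    rw [rc, ← mul_inv, Real.mul_self_sqrt (by norm_num : (0:ℝ) ≤ 2)]
    norm_num
  rw [← Complex.ofReal_mul, h]
  norm_num

/-- rotation matrix mixing coordinates `i` and `k` -/
def rotM (i k : Fin n) : Matrix (Fin n) (Fin n) ℂ :=
  (rc : ℂ) • (Matrix.single i i 1 + Matrix.single i k 1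
      - Matrix.single k i 1 + Matrix.single k k 1)
    + (1 - Matrix.single i i 1 - Matrix.single k k 1)

lemma stdBasis_conjT (a b : Fin n) :
    (Matrix.single a b (1:ℂ))ᴴ = Matrix.single b a 1 := by
  ext x y
  rw [Matrix.conjTranspose_apply, Matrix.single, Matrix.single]
  simp only [Matrix.of_apply]
  rw [apply_ite (star : ℂ → ℂ)]
  simp [and_comm]

lemma rotM_star (i k : Fin n) :
    star (rotM i k) = (rc : ℂ) • (Matrix.single i i 1 + Matrix.single k i 1
      - Matrix.single i k 1 + Matrix.single k k 1)
    + (1 - Matrix.single i i 1 - Matrix.single k k 1) := by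
  rw [Matrix.star_eq_conjTranspose, rotM]
  simp only [Matrix.conjTranspose_add, Matrix.conjTranspose_sub, Matrix.conjTranspose_smul,
    Matrix.conjTranspose_one, stdBasis_conjT, Complex.star_def, Complex.conj_ofReal]

lemma rotM_mem (i k : Fin n) (hik : i ≠ k) :
    rotM i k ∈ Matrix.unitaryGroup (Fin n) ℂ := by
  rw [Matrix.mem_unitaryGroup_iff, rotM_star, rotM]
  simp only [Matrix.add_mul, Matrix.mul_add, Matrix.sub_mul, Matrix.mul_sub, smul_add, smul_sub,
    Matrix.smul_mul, Matrix.mul_smul, Matrix.mul_one, Matrix.one_mul,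
    Matrix.single_mul_single_same, Matrix.single_mul_single_of_ne, hik, hik.symm,
    ne_eq, not_false_eq_true,
    smul_smul, mul_one, smul_zero, sub_zero, zero_sub, add_zero, zero_add, rc2]
  module

/-- the rotation unitary -/
def rotU (i k : Fin n) (hik : i ≠ k) : Matrix.unitaryGroup (Fin n) ℂ :=
  ⟨rotM i k, rotM_mem i k hik⟩

lemma rotM_row_i (i k : Fin n) (hik : i ≠ k) (x : Fin n) :
    rotM i k i x = if x = i then (rc:ℂ) else if x = k then (rc:ℂ) else 0 := by
  rcases eq_or_ne x i with rfl | hxi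
  · simp [rotM, Matrix.one_apply, Matrix.single_apply_same,
      Matrix.single_apply_of_ne, hik, hik.symm]
  · rcases eq_or_ne x k with rfl | hxk
    · simp [rotM, Matrix.one_apply, Matrix.single_apply_same,
        Matrix.single_apply_of_ne, hik, hik.symm, hxi]
    · simp [rotM, Matrix.one_apply, Matrix.single_apply_same,
        Matrix.single_apply_of_ne, hik, hik.symm, hxi, hxk,
        Ne.symm hxi, Ne.symm hxk]

lemma rotM_row_k (i k : Fin n) (hik : i ≠ k) (x : Fin n) :
    rotM i k k x = if x = i then -(rc:ℂ) else if x = k then (rc:ℂ) else 0 := by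
  rcases eq_or_ne x i with rfl | hxi
  · simp [rotM, Matrix.one_apply, Matrix.single_apply_same,
      Matrix.single_apply_of_ne, hik, hik.symm]
  · rcases eq_or_ne x k with rfl | hxk
    · simp [rotM, Matrix.one_apply, Matrix.single_apply_same,
        Matrix.single_apply_of_ne, hik, hik.symm, hxi]
    · simp [rotM, Matrix.one_apply, Matrix.single_apply_same,
        Matrix.single_apply_of_ne, hik, hik.symm, hxi, hxk,
        Ne.symm hxi, Ne.symm hxk]

lemma rotM_mul_row_i (i k : Fin n) (hik : i ≠ k) (p : ProjSp n) (y : Fin n) :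
    (rotM i k * p.1) i y = (rc:ℂ) * p.1 i y + (rc:ℂ) * p.1 k y := by
  rw [Matrix.mul_apply, Finset.sum_eq_add i k hik]
  · rw [rotM_row_i i k hik, rotM_row_i i k hik]
    simp [hik.symm]
  · intro c _ hc
    rw [rotM_row_i i k hik]
    simp [hc.1, hc.2]
  · simp
  · simp

lemma rotM_mul_row_k (i k : Fin n) (hik : i ≠ k) (p : ProjSp n) (y : Fin n) :
    (rotM i k * p.1) k y = -((rc:ℂ) * p.1 i y) + (rc:ℂ) * p.1 k y := by
  rw [Matrix.mul_apply, Finset.sum_eq_add i k hik]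
  · rw [rotM_row_k i k hik, rotM_row_k i k hik]
    simp [hik.symm]
    try ring
  · intro c _ hc
    rw [rotM_row_k i k hik]
    simp [hc.1, hc.2]
  · simp
  · simp

lemma rot_conj_ii (i k : Fin n) (hik : i ≠ k) (p : ProjSp n) :
    (projConj (rotU i k hik) p).1 i i
      = (1/2 : ℂ) * (p.1 i i + p.1 i k + p.1 k i + p.1 k k) := by
  show ((rotM i k) * p.1 * star (rotM i k)) i i = _
  rw [Matrix.mul_apply, Finset.sum_eq_add i k hik]
  · rw [rotM_mul_row_i i k hik, rotM_mul_row_i i k hik]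
    rw [Matrix.star_apply, Matrix.star_apply, rotM_row_i i k hik, rotM_row_i i k hik]
    simp only [if_pos rfl, if_neg hik.symm, eq_self_iff_true, if_true,
      Complex.star_def, map_neg, Complex.conj_ofReal]
    have := rc2
    linear_combination (p.1 i i + p.1 i k + p.1 k i + p.1 k k) * this
  · intro c _ hc
    rw [Matrix.star_apply, rotM_row_i i k hik]
    simp [hc.1, hc.2]
  · simp
  · simp

lemma rot_conj_kk (i k : Fin n) (hik : i ≠ k) (p : ProjSp n) :
    (projConj (rotU i k hik) p).1 k k
      = (1/2 : ℂ) * (p.1 i i - p.1 i k - p.1 k i + p.1 k k) := by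
  show ((rotM i k) * p.1 * star (rotM i k)) k k = _
  rw [Matrix.mul_apply, Finset.sum_eq_add i k hik]
  · rw [rotM_mul_row_k i k hik, rotM_mul_row_k i k hik]
    rw [Matrix.star_apply, Matrix.star_apply, rotM_row_k i k hik, rotM_row_k i k hik]
    simp only [if_pos rfl, if_neg hik.symm, eq_self_iff_true, if_true,
      Complex.star_def, map_neg, Complex.conj_ofReal]
    have := rc2
    linear_combination (p.1 i i - p.1 i k - p.1 k i + p.1 k k) * this
  · intro c _ hc
    rw [Matrix.star_apply, rotM_row_k i k hik]
    simp [hc.1, hc.2]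
  · simp
  · simp
section
include hinv

lemma m1_diag_eq (i k : Fin n) : M1 μ i i = M1 μ k k := by
  rcases eq_or_ne i k with rfl | hik
  · rfl
  · have h := integral_inv μ hinv (permU (Equiv.swap i k)) (f := fun p : ProjSp n => p.1 i i)
      (measurable_entry i i).aestronglyMeasurable
    calc M1 μ i i = ∫ p : ProjSp n, (projConj (permU (Equiv.swap i k)) p).1 i i ∂μ := h.symm
      _ = ∫ p : ProjSp n, p.1 k k ∂μ := by
          congr 1; funext p
          rw [permU_entry]
          rw [Equiv.swap_apply_left]
      _ = M1 μ k k := rfl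

lemma m2_diag4_eq (i k : Fin n) : M2 μ i i i i = M2 μ k k k k := by
  rcases eq_or_ne i k with rfl | hik
  · rfl
  · have h := integral_inv μ hinv (permU (Equiv.swap i k))
      (f := fun p : ProjSp n => p.1 i i * p.1 i i)
      ((measurable_entry i i).mul (measurable_entry i i)).aestronglyMeasurable
    calc M2 μ i i i i
        = ∫ p : ProjSp n, (projConj (permU (Equiv.swap i k)) p).1 i i *
            (projConj (permU (Equiv.swap i k)) p).1 i i ∂μ := h.symm
      _ = ∫ p : ProjSp n, p.1 k k * p.1 k k ∂μ := by
          congr 1; funext p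
          rw [permU_entry, Equiv.swap_apply_left]
      _ = M2 μ k k k k := rfl

end

lemma m2_comm (i j k l : Fin n) : M2 μ i j k l = M2 μ k l i j := by
  unfold M2
  congr 1; funext p; ring

lemma m2_minor (i k : Fin n) : M2 μ i i k k = M2 μ i k k i := by
  unfold M2
  congr 1; funext p
  exact minor_eq_c p i k

lemma integral_add4 {f1 f2 f3 f4 : ProjSp n → ℂ} (h1 : Integrable f1 μ) (h2 : Integrable f2 μ)
    (h3 : Integrable f3 μ) (h4 : Integrable f4 μ) :
    ∫ p, (f1 p + f2 p + f3 p + f4 p) ∂μ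
      = (∫ p, f1 p ∂μ) + (∫ p, f2 p ∂μ) + (∫ p, f3 p ∂μ) + ∫ p, f4 p ∂μ := by
  have h12 : Integrable (fun p => f1 p + f2 p) μ := h1.add h2
  have h123 : Integrable (fun p => f1 p + f2 p + f3 p) μ := h12.add h3
  rw [integral_add h123 h4, integral_add h12 h3, integral_add h1 h2]

section
include hinv

/-- rotation relation : `M2 iikk = (1/4) (2 M2 iiii + 2 M2 iikk - 2 M2 ikki)` -/
lemma rot_rel (i k : Fin n) (hik : i ≠ k) :
    M2 μ i i k k = (1/4 : ℂ) *
      ((M2 μ i i i i + M2 μ i i k k + M2 μ k k i i + M2 μ k k k k)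
        - (M2 μ i k i k + M2 μ i k k i + M2 μ k i i k + M2 μ k i k i)) := by
  have h := integral_inv μ hinv (rotU i k hik)
    (f := fun p : ProjSp n => p.1 i i * p.1 k k)
    ((measurable_entry i i).mul (measurable_entry k k)).aestronglyMeasurable
  have expand : ∀ p : ProjSp n,
      (projConj (rotU i k hik) p).1 i i * (projConj (rotU i k hik) p).1 k k
      = (1/4 : ℂ) * ((p.1 i i * p.1 i i + p.1 i i * p.1 k k + p.1 k k * p.1 i i
          + p.1 k k * p.1 k k)
        - (p.1 i k * p.1 i k + p.1 i k * p.1 k i + p.1 k i * p.1 i k + p.1 k i * p.1 k i)) := by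
    intro p
    rw [rot_conj_ii i k hik, rot_conj_kk i k hik]
    ring
  calc M2 μ i i k k
      = ∫ p : ProjSp n, (projConj (rotU i k hik) p).1 i i *
          (projConj (rotU i k hik) p).1 k k ∂μ := h.symm
    _ = ∫ p : ProjSp n, (1/4 : ℂ) * ((p.1 i i * p.1 i i + p.1 i i * p.1 k k
          + p.1 k k * p.1 i i + p.1 k k * p.1 k k)
        - (p.1 i k * p.1 i k + p.1 i k * p.1 k i + p.1 k i * p.1 i k
          + p.1 k i * p.1 k i)) ∂μ := by
        congr 1; funext p; exact expand p
    _ = (1/4 : ℂ) * (∫ p : ProjSp n, ((p.1 i i * p.1 i i + p.1 i i * p.1 k k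
          + p.1 k k * p.1 i i + p.1 k k * p.1 k k)
        - (p.1 i k * p.1 i k + p.1 i k * p.1 k i + p.1 k i * p.1 i k
          + p.1 k i * p.1 k i)) ∂μ) := integral_const_mul _ _
    _ = _ := by
        have hg : Integrable (fun p : ProjSp n => p.1 i i * p.1 i i + p.1 i i * p.1 k k
            + p.1 k k * p.1 i i + p.1 k k * p.1 k k) μ :=
          (((integrable_entry_mul μ i i i i).add (integrable_entry_mul μ i i k k)).add
            (integrable_entry_mul μ k k i i)).add (integrable_entry_mul μ k k k k)
        have hh : Integrable (fun p : ProjSp n => p.1 i k * p.1 i k + p.1 i k * p.1 k i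
            + p.1 k i * p.1 i k + p.1 k i * p.1 k i) μ :=
          (((integrable_entry_mul μ i k i k).add (integrable_entry_mul μ i k k i)).add
            (integrable_entry_mul μ k i i k)).add (integrable_entry_mul μ k i k i)
        rw [integral_sub hg hh,
          integral_add4 μ (integrable_entry_mul μ i i i i) (integrable_entry_mul μ i i k k)
            (integrable_entry_mul μ k k i i) (integrable_entry_mul μ k k k k),
          integral_add4 μ (integrable_entry_mul μ i k i k) (integrable_entry_mul μ i k k i)
            (integrable_entry_mul μ k i i k) (integrable_entry_mul μ k i k i)]
        rfl

/-- Key: off-diagonal second moments are half the diagonal one. -/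
lemma m2_half (i k : Fin n) (hik : i ≠ k) :
    M2 μ i i k k = M2 μ i i i i / 2 := by
  have h1 := rot_rel μ hinv i k hik
  have h2 : M2 μ i k i k = 0 := m2_zero μ hinv (by
    push_neg
    constructor
    · rintro ⟨rfl, -⟩; exact absurd rfl hik
    · rintro ⟨rfl, -⟩; exact absurd rfl hik)
  have h3 : M2 μ k i k i = 0 := m2_zero μ hinv (by
    push_neg
    constructor
    · rintro ⟨rfl, -⟩; exact absurd rfl hik.symm
    · rintro ⟨rfl, -⟩; exact absurd rfl hik.symm)
  have h4 : M2 μ k k i i = M2 μ i i k k := m2_comm μ k k i i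
  have h5 : M2 μ k i i k = M2 μ i k k i := m2_comm μ k i i k
  have h6 : M2 μ k k k k = M2 μ i i i i := m2_diag4_eq μ hinv k i
  have h7 : M2 μ i i k k = M2 μ i k k i := m2_minor μ i k
  rw [h2, h3, h4, h5, h6, ← h7] at h1
  linear_combination h1

/-- `∑ k, M2 i k k i = M1 i i` -/
lemma m2_row_sum (i : Fin n) : ∑ k, M2 μ i k k i = M1 μ i i := by
  unfold M1 M2
  rw [← integral_finset_sum _ (fun k _ => integrable_entry_mul μ i k k i)]
  congr 1; funext p
  have h : (p.1 * p.1) i i = p.1 i i := by rw [p.2.2.1]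
  simpa [Matrix.mul_apply] using h

lemma m1_diag_val (i : Fin n) : M1 μ i i = ((n : ℂ))⁻¹ := by
  have hn : (n : ℂ) ≠ 0 := by
    have : 0 < n := Fin.pos i
    exact_mod_cast Nat.cast_ne_zero.mpr this.ne'
  have hsum : ∑ j, M1 μ j j = 1 := by
    unfold M1
    rw [← integral_finset_sum _ (fun j _ => integrable_entry μ j j)]
    have hone : ∀ p : ProjSp n, ∑ j, p.1 j j = 1 := fun p => p.2.2.2
    rw [show (fun p : ProjSp n => ∑ j, p.1 j j) = fun _ => (1:ℂ) from funext fun p => hone p]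
    simp
  have heq : ∀ j : Fin n, M1 μ j j = M1 μ i i := fun j => m1_diag_eq μ hinv j i
  rw [Finset.sum_congr rfl (fun j _ => heq j)] at hsum
  rw [Finset.sum_const, Finset.card_univ, Fintype.card_fin, nsmul_eq_mul] at hsum
  exact (inv_eq_of_mul_eq_one_right hsum).symm

lemma m2_diag_val (i : Fin n) :
    M2 μ i i i i = 2 / ((n : ℂ) * ((n : ℂ) + 1)) := by
  have hn : (n : ℂ) ≠ 0 := by
    have : 0 < n := Fin.pos i
    exact_mod_cast Nat.cast_ne_zero.mpr this.ne'
  have hn1 : (n : ℂ) + 1 ≠ 0 := by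
    have h : ((n + 1 : ℕ) : ℂ) ≠ 0 := Nat.cast_ne_zero.mpr (Nat.succ_ne_zero n)
    push_cast at h
    exact h
  have hrow := m2_row_sum μ hinv i
  rw [← Finset.add_sum_erase _ _ (Finset.mem_univ i)] at hrow
  have hval : ∀ k ∈ Finset.univ.erase i, M2 μ i k k i = M2 μ i i i i / 2 := by
    intro k hk
    have hik : i ≠ k := (Finset.ne_of_mem_erase hk).symm
    rw [← m2_minor μ i k, m2_half μ hinv i k hik]
  rw [Finset.sum_congr rfl hval, Finset.sum_const,
    Finset.card_erase_of_mem (Finset.mem_univ i), Finset.card_univ, Fintype.card_fin,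
    m1_diag_val μ hinv i] at hrow
  have hcast : ((n - 1 : ℕ) : ℂ) = (n:ℂ) - 1 := by
    have h1 : 1 ≤ n := Fin.pos i
    rw [Nat.cast_sub h1]; norm_num
  rw [nsmul_eq_mul, hcast] at hrow
  -- hrow : M2 iiii + ((n:ℂ) - 1) * (M2 iiii / 2) = (n:ℂ)⁻¹
  field_simp at hrow ⊢
  linear_combination hrow

lemma m2_offdiag_val (i k : Fin n) (hik : i ≠ k) :
    M2 μ i i k k = 1 / ((n : ℂ) * ((n : ℂ) + 1)) := by
  rw [m2_half μ hinv i k hik, m2_diag_val μ hinv i]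
  ring

lemma m2_cross_val (i k : Fin n) (hik : i ≠ k) :
    M2 μ i k k i = 1 / ((n : ℂ) * ((n : ℂ) + 1)) := by
  rw [← m2_minor μ i k]
  exact m2_offdiag_val μ hinv i k hik

/-- first-moment master formula -/
lemma m1_formula (i j : Fin n) :
    M1 μ i j = if i = j then ((n : ℂ))⁻¹ else 0 := by
  rcases eq_or_ne i j with rfl | hij
  · rw [if_pos rfl]; exact m1_diag_val μ hinv i
  · rw [if_neg hij]; exact m1_offdiag μ hinv hij

/-- second-moment master formula -/
lemma m2_formula (i j k l : Fin n) :
    M2 μ i j k l = ((if i = j then (1:ℂ) else 0) * (if k = l then 1 else 0)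
      + (if i = l then (1:ℂ) else 0) * (if j = k then 1 else 0)) / ((n : ℂ) * ((n : ℂ) + 1)) := by
  by_cases h1 : i = j ∧ k = l
  · obtain ⟨rfl, rfl⟩ := h1
    rcases eq_or_ne i k with rfl | hik
    · simp only [eq_self_iff_true, if_true]
      rw [m2_diag_val μ hinv i]
      ring
    · rw [if_pos rfl, if_pos rfl, if_neg hik]
      rw [m2_offdiag_val μ hinv i k hik]
      ring
  · by_cases h2 : i = l ∧ j = k
    · obtain ⟨rfl, rfl⟩ := h2
      have hij : i ≠ j := by
        rintro rfl
        exact h1 ⟨rfl, rfl⟩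
      rw [if_neg hij, if_neg (Ne.symm hij), if_pos rfl, if_pos rfl]
      rw [m2_cross_val μ hinv i j hij]
      ring
    · rw [m2_zero μ hinv (by tauto)]
      have e1 : (if i = j then (1:ℂ) else 0) * (if k = l then 1 else 0) = 0 := by
        by_cases h : i = j
        · have hkl : k ≠ l := fun hkl => h1 ⟨h, hkl⟩
          simp [hkl]
        · simp [h]
      have e2 : (if i = l then (1:ℂ) else 0) * (if j = k then 1 else 0) = 0 := by
        by_cases h : i = l
        · have hjk : j ≠ k := fun hjk => h2 ⟨h, hjk⟩
          simp [hjk]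
        · simp [h]
      rw [e1, e2]
      simp

end
lemma trace_expand (p : ProjSp n) (M : Matrix (Fin n) (Fin n) ℂ) :
    (p.1 * M).trace = ∑ x : Fin n × Fin n, p.1 x.1 x.2 * M x.2 x.1 := by
  rw [Matrix.trace, Fintype.sum_prod_type]
  simp only [Matrix.diag, Matrix.mul_apply]

lemma trace_conj (p : ProjSp n) (A : Matrix (Fin n) (Fin n) ℂ) :
    (starRingEnd ℂ) ((p.1 * A).trace) = (p.1 * Aᴴ).trace := by
  rw [trace_expand, trace_expand, map_sum]
  rw [← Equiv.sum_comp (Equiv.prodComm (Fin n) (Fin n))]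
  refine Finset.sum_congr rfl fun x _ => ?_
  simp only [Equiv.prodComm_apply, Prod.swap_prod_mk, Prod.fst_swap, Prod.snd_swap]
  rw [_root_.map_mul, entry_conj]
  simp only [Matrix.conjTranspose_apply, Complex.star_def]
  try ring

section
include hinv

lemma integral_F (M : Matrix (Fin n) (Fin n) ℂ) :
    ∫ p : ProjSp n, (p.1 * M).trace ∂μ = M.trace / (n : ℂ) := by
  calc ∫ p : ProjSp n, (p.1 * M).trace ∂μ
      = ∫ p : ProjSp n, ∑ x : Fin n × Fin n, p.1 x.1 x.2 * M x.2 x.1 ∂μ := by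
        congr 1; funext p; exact trace_expand p M
    _ = ∑ x : Fin n × Fin n, ∫ p : ProjSp n, p.1 x.1 x.2 * M x.2 x.1 ∂μ :=
        integral_finset_sum _ (fun x _ => (integrable_entry μ x.1 x.2).mul_const _)
    _ = ∑ x : Fin n × Fin n, M1 μ x.1 x.2 * M x.2 x.1 := by
        refine Finset.sum_congr rfl fun x _ => ?_
        exact integral_mul_const _ _
    _ = M.trace / (n : ℂ) := by
        rw [Fintype.sum_prod_type]
        simp only [m1_formula μ hinv, ite_mul, zero_mul]
        rw [Finset.sum_congr rfl (fun i _ => Finset.sum_ite_eq Finset.univ i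
          (fun j => ((n:ℂ))⁻¹ * M j i))]
        simp only [Finset.mem_univ, if_true]
        rw [Matrix.trace, div_eq_mul_inv, mul_comm]
        rw [Finset.mul_sum]
        rfl

lemma sum4_1 (C B : Matrix (Fin n) (Fin n) ℂ) :
    ∑ i : Fin n, ∑ j : Fin n, ∑ k : Fin n, ∑ l : Fin n,
      (C j i * B l k) * ((if i = j then (1:ℂ) else 0) * (if k = l then 1 else 0))
    = C.trace * B.trace := by
  have inner : ∀ i j k : Fin n, ∑ l, (C j i * B l k) *
      ((if i = j then (1:ℂ) else 0) * (if k = l then 1 else 0))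
      = (C j i * B k k) * (if i = j then (1:ℂ) else 0) := by
    intro i j k
    rw [Finset.sum_eq_single k]
    · simp
    · intro l _ hlk
      simp [Ne.symm hlk]
    · simp
  simp only [inner]
  have h2 : ∀ i : Fin n, (∑ j, ∑ k, (C j i * B k k) * (if i = j then (1:ℂ) else 0))
      = ∑ k, C i i * B k k := by
    intro i
    rw [Finset.sum_eq_single i]
    · simp
    · intro j _ hji
      simp [Ne.symm hji]
    · simp
  simp only [h2]
  rw [Matrix.trace, Matrix.trace, Finset.sum_mul_sum]
  rfl

lemma sum4_2 (C B : Matrix (Fin n) (Fin n) ℂ) :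
    ∑ i : Fin n, ∑ j : Fin n, ∑ k : Fin n, ∑ l : Fin n,
      (C j i * B l k) * ((if i = l then (1:ℂ) else 0) * (if j = k then 1 else 0))
    = (C * B).trace := by
  have inner : ∀ i j k : Fin n, ∑ l, (C j i * B l k) *
      ((if i = l then (1:ℂ) else 0) * (if j = k then 1 else 0))
      = (C j i * B i k) * (if j = k then (1:ℂ) else 0) := by
    intro i j k
    rw [Finset.sum_eq_single i]
    · simp
    · intro l _ hli
      simp [Ne.symm hli]
    · simp
  simp only [inner]
  have h2 : ∀ i j : Fin n, (∑ k, (C j i * B i k) * (if j = k then (1:ℂ) else 0))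
      = C j i * B i j := by
    intro i j
    rw [Finset.sum_eq_single j]
    · simp
    · intro k _ hkj
      simp [Ne.symm hkj]
    · simp
  simp only [h2]
  rw [Finset.sum_comm, Matrix.trace]
  simp only [Matrix.diag, Matrix.mul_apply]

set_option maxHeartbeats 2000000 in
lemma integral_FF (C B : Matrix (Fin n) (Fin n) ℂ) :
    ∫ p : ProjSp n, (p.1 * C).trace * (p.1 * B).trace ∂μ
      = (C.trace * B.trace + (C * B).trace) / ((n : ℂ) * ((n : ℂ) + 1)) := by
  have hpt : ∀ p : ProjSp n, (p.1 * C).trace * (p.1 * B).trace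
      = ∑ z : (Fin n × Fin n) × (Fin n × Fin n),
          (C z.1.2 z.1.1 * B z.2.2 z.2.1) * (p.1 z.1.1 z.1.2 * p.1 z.2.1 z.2.2) := by
    intro p
    calc (p.1 * C).trace * (p.1 * B).trace
        = ∑ x : Fin n × Fin n, ∑ y : Fin n × Fin n,
            (p.1 x.1 x.2 * C x.2 x.1) * (p.1 y.1 y.2 * B y.2 y.1) := by
          rw [trace_expand, trace_expand, Finset.sum_mul_sum]
      _ = ∑ x : Fin n × Fin n, ∑ y : Fin n × Fin n,
            (C x.2 x.1 * B y.2 y.1) * (p.1 x.1 x.2 * p.1 y.1 y.2) :=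
          Finset.sum_congr rfl fun x _ => Finset.sum_congr rfl fun y _ => by ring
      _ = _ := (Fintype.sum_prod_type (fun z : (Fin n × Fin n) × (Fin n × Fin n) =>
            C z.1.2 z.1.1 * B z.2.2 z.2.1 * (p.1 z.1.1 z.1.2 * p.1 z.2.1 z.2.2))).symm
  calc ∫ p : ProjSp n, (p.1 * C).trace * (p.1 * B).trace ∂μ
      = ∫ p : ProjSp n, ∑ z : (Fin n × Fin n) × (Fin n × Fin n),
          (C z.1.2 z.1.1 * B z.2.2 z.2.1) * (p.1 z.1.1 z.1.2 * p.1 z.2.1 z.2.2) ∂μ := by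
        congr 1; funext p; exact hpt p
    _ = ∑ z : (Fin n × Fin n) × (Fin n × Fin n),
          ∫ p : ProjSp n, (C z.1.2 z.1.1 * B z.2.2 z.2.1) *
            (p.1 z.1.1 z.1.2 * p.1 z.2.1 z.2.2) ∂μ :=
        integral_finset_sum _ (fun z _ =>
          (integrable_entry_mul μ z.1.1 z.1.2 z.2.1 z.2.2).const_mul _)
    _ = ∑ z : (Fin n × Fin n) × (Fin n × Fin n),
          (C z.1.2 z.1.1 * B z.2.2 z.2.1) * M2 μ z.1.1 z.1.2 z.2.1 z.2.2 := by
        refine Finset.sum_congr rfl fun z _ => ?_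
        exact integral_const_mul _ _
    _ = (∑ z : (Fin n × Fin n) × (Fin n × Fin n),
          (C z.1.2 z.1.1 * B z.2.2 z.2.1) *
            ((if z.1.1 = z.1.2 then (1:ℂ) else 0) * (if z.2.1 = z.2.2 then 1 else 0)
              + (if z.1.1 = z.2.2 then (1:ℂ) else 0) * (if z.1.2 = z.2.1 then 1 else 0)))
          / ((n : ℂ) * ((n : ℂ) + 1)) := by
        rw [Finset.sum_div]
        refine Finset.sum_congr rfl fun z _ => ?_
        rw [m2_formula μ hinv]
        exact (mul_div_assoc _ _ _).symm
    _ = (C.trace * B.trace + (C * B).trace) / ((n : ℂ) * ((n : ℂ) + 1)) := by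
        refine congrArg (· / _) ?_
        simp only [Fintype.sum_prod_type]
        simp only [mul_add, Finset.sum_add_distrib]
        congr 1
        · exact sum4_1 μ hinv C B
        · exact sum4_2 μ hinv C B

end

end TrAux

/-- Inverse trace-integral formula: for operators `A, B` on `ℂⁿ`,
`tr(A*B) = n(n+1) ∫ conj(F_A) F_B dμₙ − n² (∫ conj(F_A) dμₙ)(∫ F_B dμₙ)`,
with `F_A(p) = tr(pA)` and `μₙ` the `U(n)`-invariant probability measure. -/
theorem trace_eq_integrals (n : ℕ) (A B : Matrix (Fin n) (Fin n) ℂ)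
    (μ : Measure (ProjSp n)) [IsProbabilityMeasure μ]
    (hinv : ∀ U : Matrix.unitaryGroup (Fin n) ℂ, Measure.map (projConj U) μ = μ) :
    (Aᴴ * B).trace =
      (n : ℂ) * ((n : ℂ) + 1) *
          ∫ p : ProjSp n, (starRingEnd ℂ) ((p.1 * A).trace) * (p.1 * B).trace ∂μ -
        (n : ℂ) ^ 2 * (∫ p : ProjSp n, (starRingEnd ℂ) ((p.1 * A).trace) ∂μ) *
          (∫ p : ProjSp n, (p.1 * B).trace ∂μ) := by
  rcases Nat.eq_zero_or_pos n with rfl | hn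
  · exfalso
    have h1 : μ Set.univ = 1 := measure_univ
    have hempty : IsEmpty (ProjSp 0) := by
      refine ⟨fun p => ?_⟩
      have h := p.2.2.2
      simp [Matrix.trace] at h
    rw [Set.univ_eq_empty_iff.mpr hempty, measure_empty] at h1
    exact zero_ne_one h1
  · have hn0 : (n : ℂ) ≠ 0 := Nat.cast_ne_zero.mpr hn.ne'
    have hn1 : (n : ℂ) + 1 ≠ 0 := by
      have h : ((n + 1 : ℕ) : ℂ) ≠ 0 := Nat.cast_ne_zero.mpr (Nat.succ_ne_zero n)
      push_cast at h
      exact h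
    have e1 : (∫ p : ProjSp n, (starRingEnd ℂ) ((p.1 * A).trace) * (p.1 * B).trace ∂μ)
        = ∫ p : ProjSp n, (p.1 * Aᴴ).trace * (p.1 * B).trace ∂μ := by
      congr 1; funext p; rw [TrAux.trace_conj]
    have e2 : (∫ p : ProjSp n, (starRingEnd ℂ) ((p.1 * A).trace) ∂μ)
        = ∫ p : ProjSp n, (p.1 * Aᴴ).trace ∂μ := by
      congr 1; funext p; rw [TrAux.trace_conj]
    rw [e1, e2, TrAux.integral_FF μ hinv Aᴴ B, TrAux.integral_F μ hinv Aᴴ,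
      TrAux.integral_F μ hinv B]
    field_simp
    ring
end
end
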